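/- arXiv:2409.19344 — 3 statements merged into one kernel-verified Lean document; each statement's English description precedes it below -/
import Mathlib

section
/- Let r ≥ 3 and t ≥ 1 be integers and let α ∈ (0,1) be the unique real number in (0,1) satisfying α = 1/2 + α^r/2. Then for all integers n, k with n ≥ 2k, every r-wise t-intersecting family 𝓕 of k-element subsets of [n] satisfies |𝓕| ≤ α^t · C(n,k). -/
/-- A family `𝓕` is `r`-wise `t`-intersecting if any `r` (not necessarily distinct)
members have at least `t` common elements. -/
def RwiseIntersecting (r t : ℕ) (𝓕 : Finset (Finset ℕ)) : Prop :=
  ∀ G : Fin r → Finset ℕ, (∀ i, G i ∈ 𝓕) → t ≤ (⋂ i, ((G i : Finset ℕ) : Set ℕ)).ncard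

open Finset
open scoped Classical

section FranklAux

lemma binId (n k : ℕ) : (n+1) * Nat.choose n k = Nat.choose (n+1) k * (n+1-k) := by
  rw [Nat.add_one_mul_choose_eq, Nat.choose_succ_right_eq]

lemma bin1 (n k : ℕ) (h : 2*k ≤ n) (hk : 1 ≤ k) :
    2 * Nat.choose (n-1) (k-1) ≤ Nat.choose n k := by
  obtain ⟨k, rfl⟩ : ∃ j, k = j + 1 := ⟨k-1, by omega⟩
  obtain ⟨n, rfl⟩ : ∃ m, n = m + 1 := ⟨n-1, by omega⟩
  simp only [Nat.add_sub_cancel]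
  have h1 : (n+1) * Nat.choose n k = Nat.choose (n+1) (k+1) * (k+1) := by
    simpa using Nat.add_one_mul_choose_eq n k
  have h2 : (2*(k+1)) * Nat.choose n k ≤ (n+1) * Nat.choose n k :=
    Nat.mul_le_mul_right _ (by omega)
  rw [h1] at h2
  have h3 : (2 * Nat.choose n k) * (k+1) ≤ Nat.choose (n+1) (k+1) * (k+1) := by
    calc (2 * Nat.choose n k) * (k+1) = (2*(k+1)) * Nat.choose n k := by ring
      _ ≤ _ := h2
  exact Nat.le_of_mul_le_mul_right h3 (by omega)

lemma bin3 (n k : ℕ) (h : 2*k+1 ≤ n) (hk : 2 ≤ k) :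
    8 * Nat.choose (n-3) (k-2) ≤ Nat.choose n k := by
  obtain ⟨j, rfl⟩ : ∃ j, k = j + 2 := ⟨k-2, by omega⟩
  obtain ⟨m, rfl⟩ : ∃ m, n = m + 3 := ⟨n-3, by omega⟩
  simp only [Nat.add_sub_cancel]
  have e1 : (m+3) * Nat.choose (m+2) (j+1) = Nat.choose (m+3) (j+2) * (j+2) := by
    simpa using Nat.add_one_mul_choose_eq (m+2) (j+1)
  have e2 : (m+2) * Nat.choose (m+1) j = Nat.choose (m+2) (j+1) * (j+1) := by
    simpa using Nat.add_one_mul_choose_eq (m+1) j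
  have e3 : (m+1) * Nat.choose m j = Nat.choose (m+1) j * (m+1-j) := binId m j
  obtain ⟨e, rfl⟩ : ∃ e, m = 2*j + 2 + e := ⟨m - (2*j+2), by omega⟩
  have hmj : 2*j+2+e+1-j = j+3+e := by omega
  rw [hmj] at e3
  set m := 2*j+2+e with hm
  have key : ((j+2) * ((j+1) * (j+3+e))) * Nat.choose (m+3) (j+2)
      = (m+3) * ((m+2) * ((m+1) * Nat.choose m j)) := by
    calc ((j+2) * ((j+1) * (j+3+e))) * Nat.choose (m+3) (j+2)
        = ((j+1) * (j+3+e)) * (Nat.choose (m+3) (j+2) * (j+2)) := by ring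
      _ = ((j+1) * (j+3+e)) * ((m+3) * Nat.choose (m+2) (j+1)) := by rw [e1]
      _ = (m+3) * ((j+3+e) * (Nat.choose (m+2) (j+1) * (j+1))) := by ring
      _ = (m+3) * ((j+3+e) * ((m+2) * Nat.choose (m+1) j)) := by rw [e2]
      _ = (m+3) * ((m+2) * (Nat.choose (m+1) j * (j+3+e))) := by ring
      _ = (m+3) * ((m+2) * ((m+1) * Nat.choose m j)) := by rw [← e3]
  have num : 8 * ((j+2) * ((j+1) * (j+3+e))) ≤ (m+3) * ((m+2) * (m+1)) := by
    simp only [hm]; nlinarith [sq_nonneg j, sq_nonneg e, Nat.zero_le j, Nat.zero_le e]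
  have main : ((j+2) * ((j+1) * (j+3+e))) * (8 * Nat.choose m j)
      ≤ ((j+2) * ((j+1) * (j+3+e))) * Nat.choose (m+3) (j+2) := by
    calc ((j+2) * ((j+1) * (j+3+e))) * (8 * Nat.choose m j)
        = (8 * ((j+2) * ((j+1) * (j+3+e)))) * Nat.choose m j := by ring
      _ ≤ ((m+3) * ((m+2) * (m+1))) * Nat.choose m j := Nat.mul_le_mul_right _ num
      _ = (m+3) * ((m+2) * ((m+1) * Nat.choose m j)) := by ring
      _ = _ := key.symm
  exact Nat.le_of_mul_le_mul_left main (by positivity)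

lemma binD (d : ℕ) : ∀ n k : ℕ, 2*k+1 ≤ n → 2*d ≤ k →
    8^d * Nat.choose (n-3*d) (k-2*d) ≤ Nat.choose n k := by
  induction d with
  | zero => intro n k _ _; simpa using le_refl _
  | succ d ih =>
    intro n k h hd
    have step := bin3 n k h (by omega)
    have ihh := ih (n-3) (k-2) (by omega) (by omega)
    calc 8^(d+1) * Nat.choose (n-3*(d+1)) (k-2*(d+1))
        = 8 * (8^d * Nat.choose ((n-3)-3*d) ((k-2)-2*d)) := by
          rw [show n-3*(d+1) = (n-3)-3*d by omega, show k-2*(d+1) = (k-2)-2*d by omega]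
          ring
      _ ≤ 8 * Nat.choose (n-3) (k-2) := Nat.mul_le_mul_left _ ihh
      _ ≤ Nat.choose n k := step

lemma binE (e : ℕ) : ∀ n k : ℕ, 2*k ≤ n → e ≤ k →
    2^e * Nat.choose (n-e) (k-e) ≤ Nat.choose n k := by
  induction e with
  | zero => intro n k _ _; simpa using le_refl _
  | succ e ih =>
    intro n k h he
    have step := bin1 n k h (by omega)
    have ihh := ih (n-1) (k-1) (by omega) (by omega)
    calc 2^(e+1) * Nat.choose (n-(e+1)) (k-(e+1))
        = 2 * (2^e * Nat.choose ((n-1)-e) ((k-1)-e)) := by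
          rw [show n-(e+1) = (n-1)-e by omega, show k-(e+1) = (k-1)-e by omega]; ring
      _ ≤ 2 * Nat.choose (n-1) (k-1) := Nat.mul_le_mul_left _ ihh
      _ ≤ Nat.choose n k := step

lemma binMain (n k u d : ℕ) (hn : 2*k ≤ n) (hu : 2*d+1 ≤ u) (huk : u ≤ k) :
    2^(u+d) * Nat.choose (n-(u+d)) (k-u) ≤ Nat.choose n k := by
  obtain ⟨e, rfl⟩ : ∃ e, u = 1 + 2*d + e := ⟨u - (1+2*d), by omega⟩
  have s1 : 2^e * Nat.choose ((n-1-3*d)-e) ((k-1-2*d)-e) ≤ Nat.choose (n-1-3*d) (k-1-2*d) :=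
    binE e (n-1-3*d) (k-1-2*d) (by omega) (by omega)
  have s2 : 8^d * Nat.choose ((n-1)-3*d) ((k-1)-2*d) ≤ Nat.choose (n-1) (k-1) :=
    binD d (n-1) (k-1) (by omega) (by omega)
  have s3 : 2 * Nat.choose (n-1) (k-1) ≤ Nat.choose n k := bin1 n k hn (by omega)
  calc 2^(1+2*d+e+d) * Nat.choose (n-(1+2*d+e+d)) (k-(1+2*d+e))
      = 2 * (8^d * (2^e * Nat.choose ((n-1-3*d)-e) ((k-1-2*d)-e))) := by
        rw [show n-(1+2*d+e+d) = (n-1-3*d)-e by omega,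
            show k-(1+2*d+e) = (k-1-2*d)-e by omega,
            show (8:ℕ) = 2^3 by norm_num]
        rw [← pow_mul, show 1+2*d+e+d = 1 + 3*d + e by omega, pow_add, pow_add, pow_one]
        ring
    _ ≤ 2 * (8^d * Nat.choose (n-1-3*d) (k-1-2*d)) := by
        exact Nat.mul_le_mul_left _ (Nat.mul_le_mul_left _ s1)
    _ ≤ 2 * Nat.choose (n-1) (k-1) := Nat.mul_le_mul_left _ s2
    _ ≤ Nat.choose n k := s3

def HitsFrom (r t a N : ℕ) (S : Finset ℕ) : Prop :=
  ∃ m, m ≤ N ∧ (r-1)*m + t ≤ r * ((S ∩ Finset.Icc (a+1) (a+m)).card)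

lemma hitsFrom_zero_iff {r t a : ℕ} (S : Finset ℕ) :
    HitsFrom r t a 0 S ↔ t = 0 := by
  constructor
  · rintro ⟨m, hm, h⟩
    interval_cases m
    simp at h; omega
  · intro h; exact ⟨0, le_refl _, by simp [h]⟩

lemma hitsFrom_of_zero {r a N : ℕ} (S : Finset ℕ) : HitsFrom r 0 a N S :=
  ⟨0, Nat.zero_le _, by simp⟩

-- shifting lemma: a+1 ∉ S
lemma hitsFrom_notmem {r t a N : ℕ} (hr : 1 ≤ r) (ht : 1 ≤ t) (S : Finset ℕ)
    (hS : (a+1) ∉ S) :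
    HitsFrom r t a (N+1) S ↔ HitsFrom r (t+(r-1)) (a+1) N S := by
  have inter_eq : ∀ m' : ℕ, S ∩ Finset.Icc (a+1) (a+(m'+1)) = S ∩ Finset.Icc (a+1+1) (a+1+m') := by
    intro m'; ext x
    simp only [Finset.mem_inter, Finset.mem_Icc]
    constructor
    · rintro ⟨hx, h1, h2⟩
      refine ⟨hx, ?_, by omega⟩
      rcases Nat.lt_or_ge (a+1) x with h | h
      · omega
      · exfalso; have : x = a+1 := by omega
        exact hS (this ▸ hx)
    · rintro ⟨hx, h1, h2⟩; exact ⟨hx, by omega, by omega⟩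
  constructor
  · rintro ⟨m, hm, h⟩
    obtain ⟨m', rfl⟩ : ∃ m', m = m'+1 := by
      rcases m with _ | m'
      · exfalso; simp at h; omega
      · exact ⟨m', rfl⟩
    refine ⟨m', by omega, ?_⟩
    rw [inter_eq m'] at h
    have expand : (r-1)*(m'+1) = (r-1)*m' + (r-1) := by ring
    rw [expand] at h
    generalize hX : (r-1)*m' = X at *
    generalize hY : r * ((S ∩ Finset.Icc (a+1+1) (a+1+m')).card) = Y at *
    omega
  · rintro ⟨m', hm', h⟩
    refine ⟨m'+1, by omega, ?_⟩
    rw [inter_eq m']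
    have expand : (r-1)*(m'+1) = (r-1)*m' + (r-1) := by ring
    rw [expand]
    generalize hX : (r-1)*m' = X at *
    generalize hY : r * ((S ∩ Finset.Icc (a+1+1) (a+1+m')).card) = Y at *
    omega

-- shifting lemma: inserting a+1
lemma hitsFrom_insert {r t a N : ℕ} (hr : 1 ≤ r) (ht : 1 ≤ t) (S : Finset ℕ)
    (hS : (a+1) ∉ S) :
    HitsFrom r t a (N+1) (insert (a+1) S) ↔ HitsFrom r (t-1) (a+1) N S := by
  have inter_eq : ∀ m' : ℕ,
      (insert (a+1) S) ∩ Finset.Icc (a+1) (a+(m'+1))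
        = insert (a+1) (S ∩ Finset.Icc (a+1+1) (a+1+m')) := by
    intro m'; ext x
    simp only [Finset.mem_inter, Finset.mem_insert, Finset.mem_Icc]
    constructor
    · rintro ⟨hx | hx, h1, h2⟩
      · exact Or.inl hx
      · rcases Nat.lt_or_ge (a+1) x with h | h
        · exact Or.inr ⟨hx, by omega, by omega⟩
        · left; omega
    · rintro (rfl | ⟨hx, h1, h2⟩)
      · exact ⟨Or.inl rfl, by omega, by omega⟩
      · exact ⟨Or.inr hx, by omega, by omega⟩
  have card_eq : ∀ m' : ℕ,
      ((insert (a+1) S) ∩ Finset.Icc (a+1) (a+(m'+1))).card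
        = (S ∩ Finset.Icc (a+1+1) (a+1+m')).card + 1 := by
    intro m'
    rw [inter_eq m', Finset.card_insert_of_notMem]
    simp only [Finset.mem_inter, Finset.mem_Icc]
    rintro ⟨_, h, _⟩; omega
  constructor
  · rintro ⟨m, hm, h⟩
    obtain ⟨m', rfl⟩ : ∃ m', m = m'+1 := by
      rcases m with _ | m'
      · exfalso; simp at h; omega
      · exact ⟨m', rfl⟩
    refine ⟨m', by omega, ?_⟩
    rw [card_eq m'] at h
    have expand : (r-1)*(m'+1) = (r-1)*m' + (r-1) := by ring
    rw [expand, Nat.mul_add] at h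
    generalize hX : (r-1)*m' = X at *
    generalize hY : r * ((S ∩ Finset.Icc (a+1+1) (a+1+m')).card) = Y at *
    omega
  · rintro ⟨m', hm', h⟩
    refine ⟨m'+1, by omega, ?_⟩
    rw [card_eq m']
    have expand : (r-1)*(m'+1) = (r-1)*m' + (r-1) := by ring
    rw [expand, Nat.mul_add]
    generalize hX : (r-1)*m' = X at *
    generalize hY : r * ((S ∩ Finset.Icc (a+1+1) (a+1+m')).card) = Y at *
    omega

theorem hit_count (r : ℕ) (hr : 3 ≤ r) (α : ℝ) (hα0 : 0 < α) (hα1 : α < 1)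
    (heq : 1 + α^r = 2*α) :
    ∀ N a t : ℕ,
      ((((Finset.Icc (a+1) (a+N)).powerset.filter (HitsFrom r t a N)).card : ℝ))
        ≤ α^t * 2^N := by
  intro N
  induction N with
  | zero =>
    intro a t
    rcases Nat.eq_zero_or_pos t with rfl | ht
    · calc (((Finset.Icc (a+1) (a+0)).powerset.filter (HitsFrom r 0 a 0)).card : ℝ)
          ≤ ((Finset.Icc (a+1) (a+0)).powerset.card : ℝ) := by
            exact_mod_cast Finset.card_filter_le _ _
        _ ≤ 1 := by simp
        _ = α^0 * 2^0 := by norm_num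
    · have : (Finset.Icc (a+1) (a+0)).powerset.filter (HitsFrom r t a 0) = ∅ := by
        rw [Finset.filter_eq_empty_iff]
        intro S _
        rw [hitsFrom_zero_iff]
        omega
      rw [this]
      simp
      positivity
  | succ N ih =>
    intro a t
    rcases Nat.eq_zero_or_pos t with rfl | ht
    · calc (((Finset.Icc (a+1) (a+(N+1))).powerset.filter (HitsFrom r 0 a (N+1))).card : ℝ)
          ≤ ((Finset.Icc (a+1) (a+(N+1))).powerset.card : ℝ) := by
            exact_mod_cast Finset.card_filter_le _ _
        _ ≤ 2^(N+1) := by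
            rw [Finset.card_powerset, Nat.card_Icc,
              show a + (N+1) + 1 - (a+1) = N+1 by omega]
            norm_num
        _ = α^0 * 2^(N+1) := by norm_num
    -- t ≥ 1
    set P := (Finset.Icc (a+1) (a+(N+1))).powerset
    set H := HitsFrom r t a (N+1)
    have hsplit : (P.filter H).card
        = ((P.filter H).filter (fun S => (a+1) ∈ S)).card
          + ((P.filter H).filter (fun S => (a+1) ∉ S)).card :=
      (Finset.card_filter_add_card_filter_not (fun S => (a+1) ∈ S)).symm
    -- the part without a+1
    have hIcc : Finset.Icc (a+1+1) (a+1+N) = Finset.Icc (a+2) (a+(N+1)) := by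
      congr 1 <;> omega
    have hwithout : (P.filter H).filter (fun S => (a+1) ∉ S)
        = (Finset.Icc (a+1+1) (a+1+N)).powerset.filter (HitsFrom r (t+(r-1)) (a+1) N) := by
      ext S
      simp only [Finset.mem_filter, Finset.mem_powerset, P, H, hIcc]
      constructor
      · rintro ⟨⟨hsub, hH⟩, hnot⟩
        have hsub' : S ⊆ Finset.Icc (a+2) (a+(N+1)) := by
          intro x hx
          have := hsub hx
          simp only [Finset.mem_Icc] at this ⊢
          have : x ≠ a+1 := fun h => hnot (h ▸ hx)
          omega
        exact ⟨hsub', (hitsFrom_notmem (by omega) ht S hnot).1 hH⟩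
      · rintro ⟨hsub, hH⟩
        have hnot : (a+1) ∉ S := by
          intro hx; have := hsub hx; simp only [Finset.mem_Icc] at this; omega
        refine ⟨⟨?_, (hitsFrom_notmem (by omega) ht S hnot).2 hH⟩, hnot⟩
        intro x hx; have := hsub hx; simp only [Finset.mem_Icc] at this ⊢; omega
    -- the part with a+1 : bijection via erase
    have hwith : ((P.filter H).filter (fun S => (a+1) ∈ S)).card
        = ((Finset.Icc (a+1+1) (a+1+N)).powerset.filter (HitsFrom r (t-1) (a+1) N)).card := by
      refine Finset.card_bij' (fun S _ => S.erase (a+1)) (fun S _ => insert (a+1) S) ?hi ?hj ?li ?ri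
      case hi =>
        intro S hS
        simp only [Finset.mem_filter, Finset.mem_powerset, P, H] at hS
        obtain ⟨⟨hsub, hH⟩, hmem⟩ := hS
        simp only [Finset.mem_filter, Finset.mem_powerset, hIcc]
        constructor
        · intro x hx
          rw [Finset.mem_erase] at hx
          have := hsub hx.2
          simp only [Finset.mem_Icc] at this ⊢
          have := hx.1
          omega
        · have hnot : (a+1) ∉ S.erase (a+1) := Finset.notMem_erase _ _
          have : insert (a+1) (S.erase (a+1)) = S := Finset.insert_erase hmem
          rw [← hitsFrom_insert (by omega) ht _ hnot, this]
          exact hH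
      case hj =>
        intro S hS
        simp only [Finset.mem_filter, Finset.mem_powerset, hIcc] at hS
        obtain ⟨hsub, hH⟩ := hS
        have hnot : (a+1) ∉ S := by
          intro hx; have := hsub hx; simp only [Finset.mem_Icc] at this; omega
        simp only [Finset.mem_filter, Finset.mem_powerset, P, H]
        refine ⟨⟨?_, ?_⟩, Finset.mem_insert_self _ _⟩
        · intro x hx
          rcases Finset.mem_insert.1 hx with rfl | hx
          · simp only [Finset.mem_Icc]; omega
          · have := hsub hx; simp only [Finset.mem_Icc] at this ⊢; omega
        · exact (hitsFrom_insert (by omega) ht S hnot).2 hH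
      case li =>
        intro S hS
        simp only [Finset.mem_filter, P, H] at hS
        exact Finset.insert_erase hS.2
      case ri =>
        intro S hS
        simp only [Finset.mem_filter, Finset.mem_powerset, hIcc] at hS
        have hnot : (a+1) ∉ S := by
          intro hx; have := hS.1 hx; simp only [Finset.mem_Icc] at this; omega
        exact Finset.erase_insert hnot
    -- assemble
    have ih1 := ih (a+1) (t-1)
    have ih2 := ih (a+1) (t+(r-1))
    rw [hsplit, hwith, hwithout]
    push_cast
    have hpow : α^(t+(r-1)) = α^(t-1) * α^r := by
      rw [← pow_add]
      congr 1
      omega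
    have hpow2 : α^t = α^(t-1) * α := by
      rw [← pow_succ]
      congr 1
      omega
    calc ((((Finset.Icc (a+1+1) (a+1+N)).powerset.filter (HitsFrom r (t-1) (a+1) N)).card : ℝ))
          + ((((Finset.Icc (a+1+1) (a+1+N)).powerset.filter (HitsFrom r (t+(r-1)) (a+1) N)).card : ℝ))
        ≤ α^(t-1) * 2^N + α^(t+(r-1)) * 2^N := by
          exact add_le_add ih1 ih2
      _ = α^(t-1) * (1 + α^r) * 2^N := by rw [hpow]; ring
      _ = α^(t-1) * (2*α) * 2^N := by rw [heq]
      _ = α^t * 2^(N+1) := by rw [hpow2]; ring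

theorem count_bound (r t : ℕ) (hr : 3 ≤ r) (ht : 1 ≤ t) (α : ℝ) (hα0 : 0 < α)
    (hα1 : α < 1) (heq : 1 + α^r = 2*α) (n k : ℕ) (hn : 2*k ≤ n) :
    ((((Finset.Icc 1 n).powersetCard k).filter (HitsFrom r t 0 n)).card : ℝ)
      ≤ α^t * Nat.choose n k := by
  -- basic rephrasing of HitsFrom at a = 0
  have hits_iff : ∀ S : Finset ℕ, HitsFrom r t 0 n S ↔
      ∃ m, m ≤ n ∧ (r-1)*m + t ≤ r * ((S ∩ Finset.Icc 1 m).card) := by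
    intro S
    unfold HitsFrom
    simp [zero_add]
  set Q : Finset ℕ → ℕ → Prop :=
    fun S m => (r-1)*m + t ≤ r * ((S ∩ Finset.Icc 1 m).card) with hQ
  set fp : Finset ℕ → ℕ := fun S => sInf {m | Q S m} with hfp
  set Φ : Finset ℕ → Finset ℕ := fun S => S ∩ Finset.Icc 1 (fp S) with hΦ
  set 𝓗 := ((Finset.Icc 1 n).powersetCard k).filter (HitsFrom r t 0 n) with h𝓗
  -- prefix determination
  have prefix_det : ∀ (S S' : Finset ℕ) (m m' : ℕ), m ≤ m' →
      S ∩ Finset.Icc 1 m' = S' ∩ Finset.Icc 1 m' →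
      S ∩ Finset.Icc 1 m = S' ∩ Finset.Icc 1 m := by
    intro S S' m m' hmm h
    have e : ∀ T : Finset ℕ, T ∩ Finset.Icc 1 m = (T ∩ Finset.Icc 1 m') ∩ Finset.Icc 1 m := by
      intro T; ext x
      simp only [mem_inter, mem_Icc]
      constructor
      · rintro ⟨hx, h1, h2⟩; exact ⟨⟨hx, h1, by omega⟩, h1, h2⟩
      · rintro ⟨⟨hx, _, _⟩, h1, h2⟩; exact ⟨hx, h1, h2⟩
    rw [e S, e S', h]
  -- structural facts about first passage, for S ∈ 𝓗
  have struct : ∀ S ∈ 𝓗, Q S (fp S) ∧ (∀ m < fp S, ¬ Q S m) ∧ fp S ≤ n ∧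
      1 ≤ fp S ∧ fp S ∈ S ∧ r * (Φ S).card = (r-1)*(fp S) + t ∧
      (Φ S).sup id = fp S := by
    intro S hS
    simp only [h𝓗, mem_filter, mem_powersetCard] at hS
    obtain ⟨⟨hsub, hcard⟩, hhit⟩ := hS
    rw [hits_iff] at hhit
    obtain ⟨m, hmn, hQm⟩ := hhit
    have hne : {m' | Q S m'}.Nonempty := ⟨m, hQm⟩
    have hQfp : Q S (fp S) := Nat.sInf_mem hne
    have hmin : ∀ m' < fp S, ¬ Q S m' := by
      intro m' hm'
      simp only [hfp] at hm'
      exact Nat.notMem_of_lt_sInf (s := {m | Q S m}) hm'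
    have hfpn : fp S ≤ n := le_trans (Nat.sInf_le hQm) hmn
    have hfp1 : 1 ≤ fp S := by
      by_contra h
      push_neg at h
      have h0 : fp S = 0 := by omega
      rw [h0] at hQfp
      simp only [hQ] at hQfp
      simp at hQfp
      omega
    have hfpS : fp S ∈ S := by
      by_contra hnotin
      apply hmin (fp S - 1) (by omega)
      have e : S ∩ Finset.Icc 1 (fp S - 1) = S ∩ Finset.Icc 1 (fp S) := by
        ext x
        simp only [mem_inter, mem_Icc]
        constructor
        · rintro ⟨hx, h1, h2⟩; exact ⟨hx, h1, by omega⟩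
        · rintro ⟨hx, h1, h2⟩
          refine ⟨hx, h1, ?_⟩
          rcases Nat.lt_or_ge x (fp S) with h | h
          · omega
          · exfalso
            have hx' : fp S ∈ S := by rwa [show fp S = x by omega]
            exact hnotin hx'
      simp only [hQ] at hQfp ⊢
      rw [e]
      have expand : (r-1)*(fp S) = (r-1)*(fp S - 1) + (r-1) := by
        have : fp S - 1 + 1 = fp S := by omega
        calc (r-1)*(fp S) = (r-1)*((fp S - 1) + 1) := by rw [this]
          _ = (r-1)*(fp S -1) + (r-1) := by ring
      generalize hX : (r-1)*(fp S - 1) = X at *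
      generalize hY : r * ((S ∩ Finset.Icc 1 (fp S)).card) = Y at *
      omega
    -- exact value
    have hval : r * (Φ S).card = (r-1)*(fp S) + t := by
      have hge : (r-1)*(fp S) + t ≤ r * (Φ S).card := hQfp
      have hlt : ¬ Q S (fp S - 1) := hmin _ (by omega)
      simp only [hQ] at hlt
      push_neg at hlt
      have hcard1 : (S ∩ Finset.Icc 1 (fp S - 1)).card + 1 = (Φ S).card := by
        have e : Φ S = insert (fp S) (S ∩ Finset.Icc 1 (fp S - 1)) := by
          ext x
          simp only [hΦ, mem_inter, mem_Icc, mem_insert]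
          constructor
          · rintro ⟨hx, h1, h2⟩
            rcases Nat.lt_or_ge x (fp S) with h | h
            · exact Or.inr ⟨hx, h1, by omega⟩
            · left; omega
          · rintro (rfl | ⟨hx, h1, h2⟩)
            · exact ⟨hfpS, by omega, le_refl _⟩
            · exact ⟨hx, h1, by omega⟩
        have hnm : fp S ∉ S ∩ Finset.Icc 1 (fp S - 1) := by
          simp only [mem_inter, mem_Icc]
          rintro ⟨_, _, h2⟩; omega
        rw [e, card_insert_of_notMem hnm]
      have expand : (r-1)*(fp S) = (r-1)*(fp S - 1) + (r-1) := by
        have h1 : fp S - 1 + 1 = fp S := by omega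
        calc (r-1)*(fp S) = (r-1)*((fp S - 1) + 1) := by rw [h1]
          _ = (r-1)*(fp S -1) + (r-1) := by ring
      have expand2 : r * (Φ S).card = r * ((S ∩ Finset.Icc 1 (fp S - 1)).card) + r := by
        rw [← hcard1]; ring
      rw [expand2, expand]
      rw [expand2, expand] at hge
      omega
    refine ⟨hQfp, hmin, hfpn, hfp1, hfpS, hval, ?_⟩
    · apply le_antisymm
      · apply Finset.sup_le
        intro x hx
        simp only [hΦ, mem_inter, mem_Icc] at hx
        exact hx.2.2
      · apply Finset.le_sup (f := id)
        simp only [hΦ, mem_inter, mem_Icc]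
        exact ⟨hfpS, hfp1, le_refl _⟩
  -- image family
  set 𝓟 := 𝓗.image Φ with h𝓟
  have hfiber : 𝓗.card = ∑ Pp ∈ 𝓟, (𝓗.filter (fun S => Φ S = Pp)).card :=
    Finset.card_eq_sum_card_fiberwise (fun x hx => mem_image_of_mem Φ hx)
  -- per-P data
  set M : Finset ℕ → ℕ := fun Pp => Pp.sup id with hM
  have perP : ∀ Pp ∈ 𝓟, Pp.card ≤ k ∧ M Pp ≤ n ∧ 1 ≤ M Pp ∧
      r * Pp.card = (r-1)*(M Pp) + t ∧ Pp ⊆ Finset.Icc 1 (M Pp) ∧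
      (∀ m < M Pp, ¬ ((r-1)*m + t ≤ r * ((Pp ∩ Finset.Icc 1 m).card))) ∧
      Pp.card ≤ M Pp := by
    intro Pp hPp
    obtain ⟨S, hS, rfl⟩ := Finset.mem_image.1 hPp
    obtain ⟨hQfp, hmin, hfpn, hfp1, hfpS, hval, hsup⟩ := struct S hS
    simp only [h𝓗, mem_filter, mem_powersetCard] at hS
    obtain ⟨⟨hsub, hcard⟩, hhit⟩ := hS
    have hMeq : M (Φ S) = fp S := hsup
    have hPsub : Φ S ⊆ Finset.Icc 1 (M (Φ S)) := by
      rw [hMeq]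
      intro x hx
      simp only [hΦ, mem_inter, mem_Icc] at hx ⊢
      exact hx.2
    have hprefix : ∀ m ≤ fp S, Φ S ∩ Finset.Icc 1 m = S ∩ Finset.Icc 1 m := by
      intro m hm
      apply prefix_det _ _ _ (fp S) hm
      ext x
      simp only [hΦ, mem_inter, mem_Icc]
      tauto
    refine ⟨?_, by rw [hMeq]; exact hfpn, by rw [hMeq]; exact hfp1, by rw [hMeq]; exact hval,
      hPsub, ?_, ?_⟩
    · calc (Φ S).card ≤ S.card := card_le_card (by simp [hΦ, inter_subset_left])
        _ = k := hcard
    · intro m hm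
      rw [hMeq] at hm
      have := hmin m hm
      simp only [hQ] at this
      rw [hprefix m (by omega)]
      exact this
    · rw [hMeq]
      calc (Φ S).card ≤ (Finset.Icc 1 (fp S)).card := card_le_card (by
          intro x hx; simp only [hΦ, mem_inter] at hx; exact hx.2)
        _ = fp S := by rw [Nat.card_Icc]; omega
  -- fiber bound
  have fiber_bound : ∀ Pp ∈ 𝓟,
      (𝓗.filter (fun S => Φ S = Pp)).card ≤ Nat.choose (n - M Pp) (k - Pp.card) := by
    intro Pp hPp
    obtain ⟨huk, hMn, hM1, hval, hPsub, hminP, huM⟩ := perP Pp hPp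
    have : (𝓗.filter (fun S => Φ S = Pp)).card
        ≤ ((Finset.Icc (M Pp + 1) n).powersetCard (k - Pp.card)).card := by
      apply Finset.card_le_card_of_injOn (fun S => S \ Pp)
      · intro S hS
        simp only [mem_coe, mem_filter] at hS
        obtain ⟨hS𝓗, hΦS⟩ := hS
        obtain ⟨hQfp, hmin, hfpn, hfp1, hfpS, hval', hsup⟩ := struct S hS𝓗
        have hfpM : fp S = M Pp := by
          rw [← hΦS]; exact hsup.symm
        simp only [h𝓗, mem_filter, mem_powersetCard] at hS𝓗
        obtain ⟨⟨hsub, hcard⟩, _⟩ := hS𝓗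
        rw [mem_coe, mem_powersetCard]
        constructor
        · intro x hx
          rw [mem_sdiff] at hx
          obtain ⟨hxS, hxP⟩ := hx
          have hxn := hsub hxS
          simp only [mem_Icc] at hxn ⊢
          refine ⟨?_, hxn.2⟩
          by_contra hc
          push_neg at hc
          apply hxP
          rw [← hΦS]
          simp only [hΦ, mem_inter, mem_Icc, hfpM]
          exact ⟨hxS, hxn.1, by omega⟩
        · have hPS : Pp ⊆ S := by
            rw [← hΦS]; simp [hΦ, inter_subset_left]
          rw [card_sdiff_of_subset hPS, hcard]
      · intro S1 h1 S2 h2 hEq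
        simp only [mem_coe, mem_filter] at h1 h2
        have hP1 : Pp ⊆ S1 := by rw [← h1.2]; simp [hΦ, inter_subset_left]
        have hP2 : Pp ⊆ S2 := by rw [← h2.2]; simp [hΦ, inter_subset_left]
        have hEq' : S1 \ Pp = S2 \ Pp := hEq
        have : Pp ∪ (S1 \ Pp) = Pp ∪ (S2 \ Pp) := by rw [hEq']
        rwa [Finset.union_sdiff_of_subset hP1, Finset.union_sdiff_of_subset hP2] at this
    calc (𝓗.filter (fun S => Φ S = Pp)).card
        ≤ ((Finset.Icc (M Pp + 1) n).powersetCard (k - Pp.card)).card := this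
      _ = Nat.choose (n - M Pp) (k - Pp.card) := by
          rw [Finset.card_powersetCard, Nat.card_Icc]
          congr 1
          omega
  -- extension facts: P ∪ T hits and has first passage M Pp
  have ext_facts : ∀ Pp ∈ 𝓟, ∀ T ∈ (Finset.Icc (M Pp + 1) n).powerset,
      (Pp ∪ T) ⊆ Finset.Icc 1 n ∧ HitsFrom r t 0 n (Pp ∪ T) ∧
      fp (Pp ∪ T) = M Pp ∧ (Pp ∪ T) ∩ Finset.Icc 1 (M Pp) = Pp := by
    intro Pp hPp T hT
    obtain ⟨huk, hMn, hM1, hval, hPsub, hminP, huM⟩ := perP Pp hPp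
    rw [mem_powerset] at hT
    have hTsub : ∀ x ∈ T, M Pp + 1 ≤ x ∧ x ≤ n := by
      intro x hx; have := hT hx; simp only [mem_Icc] at this; exact this
    have hinter : ∀ m ≤ M Pp, (Pp ∪ T) ∩ Finset.Icc 1 m = Pp ∩ Finset.Icc 1 m := by
      intro m hm
      ext x
      simp only [mem_inter, mem_union, mem_Icc]
      constructor
      · rintro ⟨hx | hx, h1, h2⟩
        · exact ⟨hx, h1, h2⟩
        · exfalso; have := hTsub x hx; omega
      · rintro ⟨hx, h1, h2⟩; exact ⟨Or.inl hx, h1, h2⟩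
    have hPfull : Pp ∩ Finset.Icc 1 (M Pp) = Pp := by
      apply Finset.inter_eq_left.2 hPsub
    have hQM : Q (Pp ∪ T) (M Pp) := by
      simp only [hQ]
      rw [hinter (M Pp) (le_refl _), hPfull]
      omega
    have hsubn : (Pp ∪ T) ⊆ Finset.Icc 1 n := by
      intro x hx
      rcases Finset.mem_union.1 hx with hx | hx
      · have := hPsub hx; simp only [mem_Icc] at this ⊢; omega
      · have := hTsub x hx; simp only [mem_Icc]; omega
    have hhit : HitsFrom r t 0 n (Pp ∪ T) := by
      rw [hits_iff]
      exact ⟨M Pp, hMn, hQM⟩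
    have hfpeq : fp (Pp ∪ T) = M Pp := by
      have h1 : fp (Pp ∪ T) ≤ M Pp := Nat.sInf_le hQM
      have h2 : ¬ fp (Pp ∪ T) < M Pp := by
        intro hlt
        have hmem : Q (Pp ∪ T) (fp (Pp ∪ T)) := Nat.sInf_mem (⟨M Pp, hQM⟩ : {m | Q (Pp ∪ T) m}.Nonempty)
        apply hminP _ hlt
        simp only [hQ] at hmem
        rwa [hinter _ (by omega)] at hmem
      omega
    refine ⟨hsubn, hhit, hfpeq, ?_⟩
    rw [hinter (M Pp) (le_refl _), hPfull]
  -- the big family of all hitting subsets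
  set 𝓐 := (Finset.Icc 1 n).powerset.filter (HitsFrom r t 0 n) with h𝓐
  have hAbound : (𝓐.card : ℝ) ≤ α^t * 2^n := by
    have := hit_count r hr α hα0 hα1 heq n 0 t
    simpa using this
  -- the biUnion
  set 𝓑 := 𝓟.biUnion (fun Pp => ((Finset.Icc (M Pp + 1) n).powerset).image (fun T => Pp ∪ T)) with h𝓑
  have hBA : 𝓑 ⊆ 𝓐 := by
    intro X hX
    simp only [h𝓑, mem_biUnion] at hX
    obtain ⟨Pp, hPp, hX⟩ := hX
    obtain ⟨T, hT, rfl⟩ := Finset.mem_image.1 hX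
    obtain ⟨hsubn, hhit, _, _⟩ := ext_facts Pp hPp T hT
    simp only [h𝓐, mem_filter, mem_powerset]
    exact ⟨hsubn, hhit⟩
  have hdisj : ∀ Pp1 ∈ 𝓟, ∀ Pp2 ∈ 𝓟, Pp1 ≠ Pp2 →
      Disjoint (((Finset.Icc (M Pp1 + 1) n).powerset).image (fun T => Pp1 ∪ T))
        (((Finset.Icc (M Pp2 + 1) n).powerset).image (fun T => Pp2 ∪ T)) := by
    intro Pp1 h1 Pp2 h2 hne
    rw [Finset.disjoint_left]
    intro X hX1 hX2
    obtain ⟨T1, hT1, hXeq1⟩ := Finset.mem_image.1 hX1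
    obtain ⟨T2, hT2, hXeq2⟩ := Finset.mem_image.1 hX2
    obtain ⟨_, _, hfp1, hprefix1⟩ := ext_facts Pp1 h1 T1 hT1
    obtain ⟨_, _, hfp2, hprefix2⟩ := ext_facts Pp2 h2 T2 hT2
    rw [hXeq1] at hfp1 hprefix1
    rw [hXeq2] at hfp2 hprefix2
    have : M Pp1 = M Pp2 := by rw [← hfp1, ← hfp2]
    apply hne
    rw [← hprefix1, ← hprefix2, this]
  have hBcard : 𝓑.card = ∑ Pp ∈ 𝓟, 2^(n - M Pp) := by
    rw [h𝓑, Finset.card_biUnion hdisj]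
    apply Finset.sum_congr rfl
    intro Pp hPp
    rw [Finset.card_image_of_injOn, Finset.card_powerset, Nat.card_Icc,
      show n + 1 - (M Pp + 1) = n - M Pp by omega]
    -- injectivity
    intro T1 hT1 T2 hT2 hEq
    simp only [mem_coe, mem_powerset] at hT1 hT2
    obtain ⟨huk, hMn, hM1, hval, hPsub, hminP, huM⟩ := perP Pp hPp
    have hd : ∀ T, T ⊆ Finset.Icc (M Pp + 1) n → (Pp ∪ T) \ Pp = T := by
      intro T hT
      apply Finset.union_sdiff_cancel_left
      rw [Finset.disjoint_left]
      intro x hx hxT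
      have h1 := hPsub hx
      have h2 := hT hxT
      simp only [mem_Icc] at h1 h2
      omega
    have hEq' : Pp ∪ T1 = Pp ∪ T2 := hEq
    rw [← hd T1 hT1, ← hd T2 hT2, hEq']
  have hsum_le : (∑ Pp ∈ 𝓟, 2^(n - M Pp)) ≤ 𝓐.card := by
    rw [← hBcard]
    exact Finset.card_le_card hBA
  -- per-term binomial bound in ℝ
  have hterm : ∀ Pp ∈ 𝓟, (Nat.choose (n - M Pp) (k - Pp.card) : ℝ)
      ≤ (2^(n - M Pp) : ℝ) * (Nat.choose n k) / 2^n := by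
    intro Pp hPp
    obtain ⟨huk, hMn, hM1, hval, hPsub, hminP, huM⟩ := perP Pp hPp
    set u := Pp.card with hu
    set d := M Pp - u with hd
    have hud : u + d = M Pp := by omega
    have hueq : u = (r-1)*d + t := by
      have e1 : r * u = (r-1) * u + u := by
        calc r * u = ((r-1) + 1) * u := by congr 1; omega
          _ = (r-1)*u + u := by ring
      have e2 : (r-1) * (M Pp) = (r-1)*u + (r-1)*d := by
        rw [← hud]; ring
      rw [e1, e2] at hval
      omega
    have h2d : 2*d + 1 ≤ u := by
      have : 2*d ≤ (r-1)*d := Nat.mul_le_mul_right d (by omega)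
      omega
    have hbin := binMain n k u d hn h2d huk
    rw [hud] at hbin
    -- hbin : 2^(M Pp) * choose (n - M Pp) (k - u) ≤ choose n k
    have hcast : (2:ℝ)^(M Pp) * (Nat.choose (n - M Pp) (k - u) : ℝ) ≤ (Nat.choose n k : ℝ) := by
      exact_mod_cast hbin
    have hpow : (2:ℝ)^(n - M Pp) * (2:ℝ)^(M Pp) = 2^n := by
      rw [← pow_add]
      congr 1
      omega
    rw [le_div_iff₀ (by positivity : (0:ℝ) < 2^n)]
    calc (Nat.choose (n - M Pp) (k - u) : ℝ) * 2^n
        = (2:ℝ)^(n - M Pp) * ((2:ℝ)^(M Pp) * (Nat.choose (n - M Pp) (k - u))) := by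
          rw [← hpow]; ring
      _ ≤ (2:ℝ)^(n - M Pp) * (Nat.choose n k) := by
          apply mul_le_mul_of_nonneg_left hcast (by positivity)
  -- final chain
  have hchain : (𝓗.card : ℝ) ≤ ∑ Pp ∈ 𝓟, ((Nat.choose (n - M Pp) (k - Pp.card) : ℝ)) := by
    rw [hfiber]
    push_cast
    apply Finset.sum_le_sum
    intro Pp hPp
    exact_mod_cast fiber_bound Pp hPp
  calc (𝓗.card : ℝ) ≤ ∑ Pp ∈ 𝓟, ((Nat.choose (n - M Pp) (k - Pp.card) : ℝ)) := hchain
    _ ≤ ∑ Pp ∈ 𝓟, (2^(n - M Pp) : ℝ) * (Nat.choose n k) / 2^n :=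
        Finset.sum_le_sum hterm
    _ = (∑ Pp ∈ 𝓟, (2^(n - M Pp) : ℝ)) * ((Nat.choose n k) / 2^n) := by
        rw [Finset.sum_mul]
        apply Finset.sum_congr rfl
        intro Pp _
        ring
    _ ≤ (α^t * 2^n) * ((Nat.choose n k) / 2^n) := by
        apply mul_le_mul_of_nonneg_right _ (by positivity)
        calc (∑ Pp ∈ 𝓟, (2^(n - M Pp) : ℝ)) = ((∑ Pp ∈ 𝓟, 2^(n - M Pp) : ℕ) : ℝ) := by
              push_cast; ring
          _ ≤ (𝓐.card : ℝ) := by exact_mod_cast hsum_le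
          _ ≤ α^t * 2^n := hAbound
    _ = α^t * (Nat.choose n k) := by
        field_simp

section comp
variable (r t : ℕ)

/-- the finite intersection of an r-tuple of finsets -/
noncomputable def interFin (hr : 0 < r) (G : Fin r → Finset ℕ) : Finset ℕ :=
  (G ⟨0, hr⟩).filter (fun x => ∀ s, x ∈ G s)

lemma mem_interFin (hr : 0 < r) (G : Fin r → Finset ℕ) (x : ℕ) :
    x ∈ interFin r hr G ↔ ∀ s, x ∈ G s := by
  unfold interFin
  simp only [mem_filter]
  exact ⟨fun h => h.2, fun h => ⟨h ⟨0, hr⟩, h⟩⟩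

lemma interFin_spec (hr : 0 < r) (G : Fin r → Finset ℕ) :
    (⋂ s, ((G s : Finset ℕ) : Set ℕ)) = ((interFin r hr G : Finset ℕ) : Set ℕ) := by
  ext x
  simp only [Set.mem_iInter, Finset.mem_coe, mem_interFin]

lemma rwise_iff (hr : 0 < r) (𝓕 : Finset (Finset ℕ)) :
    RwiseIntersecting r t 𝓕 ↔
      ∀ G : Fin r → Finset ℕ, (∀ s, G s ∈ 𝓕) → t ≤ (interFin r hr G).card := by
  unfold RwiseIntersecting
  constructor
  · intro h G hG
    have := h G hG
    rwa [interFin_spec r hr G, Set.ncard_coe_finset] at this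
  · intro h G hG
    rw [interFin_spec r hr G, Set.ncard_coe_finset]
    exact h G hG

end comp

noncomputable section shift
variable (i j : ℕ)

def cmps (F : Finset ℕ) : Finset ℕ :=
  if j ∈ F ∧ i ∉ F then insert i (F.erase j) else F

def cfam (𝓕 : Finset (Finset ℕ)) : Finset (Finset ℕ) :=
  (𝓕.filter (fun F => cmps i j F ∈ 𝓕)) ∪
    (𝓕.filter (fun F => cmps i j F ∉ 𝓕)).image (cmps i j)

variable {i j}

lemma cmps_recover {F : Finset ℕ} (hij : i ≠ j) (hjF : j ∈ F) (hiF : i ∉ F) :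
    insert j ((cmps i j F).erase i) = F := by
  unfold cmps
  rw [if_pos ⟨hjF, hiF⟩]
  rw [Finset.erase_insert]
  · exact Finset.insert_erase hjF
  · simp only [Finset.mem_erase]
    tauto

lemma cmps_cond {𝓕 : Finset (Finset ℕ)} {F : Finset ℕ} (hF : F ∈ 𝓕)
    (h : cmps i j F ∉ 𝓕) : j ∈ F ∧ i ∉ F := by
  by_contra hc
  apply h
  unfold cmps
  rw [if_neg hc]
  exact hF

lemma mem_cfam {𝓕 : Finset (Finset ℕ)} {X : Finset ℕ} :
    X ∈ cfam i j 𝓕 ↔ (X ∈ 𝓕 ∧ cmps i j X ∈ 𝓕) ∨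
      (∃ F ∈ 𝓕, cmps i j F ∉ 𝓕 ∧ X = cmps i j F) := by
  unfold cfam
  simp only [Finset.mem_union, Finset.mem_filter, Finset.mem_image]
  constructor
  · rintro (⟨h1, h2⟩ | ⟨F, ⟨hF1, hF2⟩, hEq⟩)
    · exact Or.inl ⟨h1, h2⟩
    · exact Or.inr ⟨F, hF1, hF2, hEq.symm⟩
  · rintro (⟨h1, h2⟩ | ⟨F, hF, h2, hEq⟩)
    · exact Or.inl ⟨h1, h2⟩
    · exact Or.inr ⟨F, ⟨hF, h2⟩, hEq.symm⟩

lemma cfam_card (hij : i ≠ j) (𝓕 : Finset (Finset ℕ)) :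
    (cfam i j 𝓕).card = 𝓕.card := by
  unfold cfam
  rw [Finset.card_union_of_disjoint, Finset.card_image_of_injOn]
  · rw [Finset.card_filter_add_card_filter_not]
  · -- injective on the moved part
    intro F1 h1 F2 h2 hEq
    simp only [Finset.mem_coe, Finset.mem_filter] at h1 h2
    obtain ⟨hj1, hi1⟩ := cmps_cond h1.1 h1.2
    obtain ⟨hj2, hi2⟩ := cmps_cond h2.1 h2.2
    rw [← cmps_recover hij hj1 hi1, ← cmps_recover hij hj2 hi2, hEq]
  · rw [Finset.disjoint_right]
    intro X hX
    obtain ⟨F, hF, rfl⟩ := Finset.mem_image.1 hX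
    simp only [Finset.mem_filter] at hF ⊢
    intro hc
    exact hF.2 hc.1

lemma cfam_subset {n k : ℕ} (hi1 : 1 ≤ i) (hin : i ≤ n) (𝓕 : Finset (Finset ℕ))
    (h : 𝓕 ⊆ Finset.powersetCard k (Finset.Icc 1 n)) :
    cfam i j 𝓕 ⊆ Finset.powersetCard k (Finset.Icc 1 n) := by
  intro X hX
  rcases mem_cfam.1 hX with ⟨h1, _⟩ | ⟨F, hF, hc, rfl⟩
  · exact h h1
  · obtain ⟨hjF, hiF⟩ := cmps_cond hF hc
    have := h hF
    rw [Finset.mem_powersetCard] at this ⊢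
    obtain ⟨hsub, hcard⟩ := this
    unfold cmps
    rw [if_pos ⟨hjF, hiF⟩]
    constructor
    · intro x hx
      rcases Finset.mem_insert.1 hx with rfl | hx
      · simp only [Finset.mem_Icc]; omega
      · exact hsub (Finset.erase_subset _ _ hx)
    · have hpos : 1 ≤ F.card := Finset.card_pos.2 ⟨j, hjF⟩
      rw [Finset.card_insert_of_notMem, Finset.card_erase_of_mem hjF]
      · omega
      · simp only [Finset.mem_erase]; tauto

lemma cfam_rwise {r t : ℕ} (hr : 0 < r) (hij : i ≠ j) (𝓕 : Finset (Finset ℕ))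
    (h : RwiseIntersecting r t 𝓕) : RwiseIntersecting r t (cfam i j 𝓕) := by
  rw [rwise_iff r t hr] at h ⊢
  intro G hG
  -- construct the replacement tuple
  set G' : Fin r → Finset ℕ := fun s =>
    if G s ∉ 𝓕 then insert j ((G s).erase i)
    else if j ∈ G s ∧ i ∉ G s then insert i ((G s).erase j) else G s with hG'
  have hG'mem : ∀ s, G' s ∈ 𝓕 := by
    intro s
    by_cases hs : G s ∈ 𝓕
    · have hcomp : cmps i j (G s) ∈ 𝓕 := by
        rcases mem_cfam.1 (hG s) with ⟨_, h2⟩ | ⟨F, hF, hc, hEq⟩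
        · exact h2
        · exact absurd (hEq ▸ hs) hc
      by_cases hcond : j ∈ G s ∧ i ∉ G s
      · simp only [hG', if_neg (not_not_intro hs), if_pos hcond]
        unfold cmps at hcomp
        rwa [if_pos hcond] at hcomp
      · simp only [hG', if_neg (not_not_intro hs), if_neg hcond]
        exact hs
    · rcases mem_cfam.1 (hG s) with ⟨h1, _⟩ | ⟨F, hF, hc, hEq⟩
      · exact absurd h1 hs
      · obtain ⟨hjF, hiF⟩ := cmps_cond hF hc
        simp only [hG', if_pos hs]
        rw [hEq, cmps_recover hij hjF hiF]
        exact hF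
  have ht' := h G' hG'mem
  -- membership transfer off i,j
  have xmem : ∀ x, x ≠ i → x ≠ j → (x ∈ interFin r hr G' ↔ x ∈ interFin r hr G) := by
    intro x hxi hxj
    rw [mem_interFin, mem_interFin]
    apply forall_congr'
    intro s
    have key : ∀ (A : Finset ℕ) (a b : ℕ), x ≠ a → x ≠ b →
        (x ∈ insert a (A.erase b) ↔ x ∈ A) := by
      intro A a b hxa hxb
      simp only [Finset.mem_insert, Finset.mem_erase]
      constructor
      · rintro (h | ⟨_, h⟩)
        · exact absurd h hxa
        · exact h
      · intro h; exact Or.inr ⟨hxb, h⟩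
    simp only [hG']
    split_ifs with h1 h2
    · exact key _ i j hxi hxj
    · exact Iff.rfl
    · exact key _ j i hxj hxi
  by_cases hB : ∀ s, G s ∈ 𝓕
  · exact h G hB
  · push_neg at hB
    obtain ⟨s₀, hs₀⟩ := hB
    have hinotin : i ∉ interFin r hr G' := by
      rw [mem_interFin]
      push_neg
      refine ⟨s₀, ?_⟩
      simp only [hG', if_pos hs₀]
      intro hmem
      rcases Finset.mem_insert.1 hmem with h | h
      · exact hij h
      · exact (Finset.mem_erase.1 h).1 rfl
    by_cases hA : ∃ s, G s ∈ 𝓕 ∧ (j ∉ G s ∨ i ∉ G s)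
    · -- j also not in the intersection of G'
      obtain ⟨s₁, hs₁F, hs₁⟩ := hA
      have hjnotin : j ∉ interFin r hr G' := by
        rw [mem_interFin]
        push_neg
        refine ⟨s₁, ?_⟩
        simp only [hG', if_neg (not_not_intro hs₁F)]
        rcases hs₁ with hjn | hin
        · split_ifs with hcond
          · exact absurd hcond.1 hjn
          · exact hjn
        · by_cases hjG : j ∈ G s₁
          · rw [if_pos ⟨hjG, hin⟩]
            intro hmem
            rcases Finset.mem_insert.1 hmem with h | h
            · exact hij h.symm
            · exact (Finset.mem_erase.1 h).1 rfl
          · rw [if_neg (by tauto)]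
            exact hjG
      -- interFin G' = interFin G' \ {i,j} = interFin G \ {i,j} ⊆ interFin G
      have hsub : interFin r hr G' ⊆ interFin r hr G := by
        intro x hx
        have hxi : x ≠ i := fun h => hinotin (h ▸ hx)
        have hxj : x ≠ j := fun h => hjnotin (h ▸ hx)
        exact (xmem x hxi hxj).1 hx
      exact le_trans ht' (Finset.card_le_card hsub)
    · -- all members of 𝓕 among G s contain both i and j
      push_neg at hA
      have hiT : i ∈ interFin r hr G := by
        rw [mem_interFin]
        intro s
        by_cases hs : G s ∈ 𝓕
        · exact (hA s hs).2
        · rcases mem_cfam.1 (hG s) with ⟨h1, _⟩ | ⟨F, hF, hc, hEq⟩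
          · exact absurd h1 hs
          · obtain ⟨hjF, hiF⟩ := cmps_cond hF hc
            rw [hEq]
            unfold cmps
            rw [if_pos ⟨hjF, hiF⟩]
            exact Finset.mem_insert_self _ _
      -- |T| ≥ |T \ {i,j}| + 1 ≥ |G'| - 1 + 1
      have step1 : (interFin r hr G').card ≤ ((interFin r hr G').erase j).card + 1 := by
        rcases Finset.decidableMem j (interFin r hr G') with hj | hj
        · rw [Finset.erase_eq_of_notMem hj]; omega
        · rw [Finset.card_erase_of_mem hj]; omega
      have step2 : ((interFin r hr G').erase j).erase i = (interFin r hr G').erase j := by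
        apply Finset.erase_eq_of_notMem
        simp only [Finset.mem_erase]
        tauto
      have step3 : ((interFin r hr G').erase j).erase i ⊆ (interFin r hr G).erase j := by
        intro x hx
        simp only [Finset.mem_erase] at hx ⊢
        obtain ⟨hxi, hxj, hxm⟩ := hx
        exact ⟨hxj, (xmem x hxi hxj).1 hxm⟩
      have step4 : ((interFin r hr G).erase j).card + 1 ≤ (interFin r hr G).card + 1 := by
        have := Finset.card_erase_le (s := interFin r hr G) (a := j)
        omega
      have step5 : i ∈ (interFin r hr G) := hiT
      -- final count: t ≤ |G'| ≤ |G' \ j| + 1 = |(G'\j)\i| + 1 ≤ |T \ j| + 1 ≤ |T| (since i ∈ T, i ∉ T \ j... )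
      have step6 : (interFin r hr G).erase j ⊇ insert i (((interFin r hr G').erase j).erase i) := by
        intro x hx
        rcases Finset.mem_insert.1 hx with rfl | hx
        · simp only [Finset.mem_erase]
          exact ⟨fun h => hij h, hiT⟩
        · exact step3 hx
      have step7 : ((interFin r hr G').erase j).erase i ⊆ ((interFin r hr G').erase j) := Finset.erase_subset _ _
      have hins : (insert i (((interFin r hr G').erase j).erase i)).card
          = (((interFin r hr G').erase j).erase i).card + 1 := by
        apply Finset.card_insert_of_notMem
        simp only [Finset.mem_erase]
        tauto
      have := Finset.card_le_card step6
      rw [hins, step2] at this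
      -- this : |G'.erase j| + 1 ≤ |T.erase j| ≤ |T|
      have hfin : ((interFin r hr G).erase j).card ≤ (interFin r hr G).card :=
        Finset.card_le_card (Finset.erase_subset _ _)
      omega

end shift

def Shifted (𝓕 : Finset (Finset ℕ)) : Prop :=
  ∀ F ∈ 𝓕, ∀ a ∈ F, ∀ b, 1 ≤ b → b < a → b ∉ F → insert b (F.erase a) ∈ 𝓕

/-- iterated replacement of elements by smaller ones, for shifted families -/
lemma shifted_replace {𝓕 : Finset (Finset ℕ)} (hS : Shifted 𝓕) (ψ : ℕ → ℕ) :
    ∀ (A F : Finset ℕ), F ∈ 𝓕 → A ⊆ F →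
      (∀ x ∈ A, 1 ≤ ψ x ∧ ψ x < x ∧ ψ x ∉ F) →
      (Set.InjOn ψ A) →
      ((F \ A) ∪ A.image ψ) ∈ 𝓕 := by
  intro A
  induction A using Finset.induction_on with
  | empty => intro F hF _ _ _; simpa using hF
  | @insert a A' ha ih =>
    intro F hF hAF hcond hinj
    have haF : a ∈ F := hAF (mem_insert_self _ _)
    obtain ⟨hψ1, hψ2, hψ3⟩ := hcond a (mem_insert_self _ _)
    set F₁ := insert (ψ a) (F.erase a) with hF₁
    have hF₁mem : F₁ ∈ 𝓕 := hS F hF a haF (ψ a) hψ1 hψ2 hψ3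
    have hA'F₁ : A' ⊆ F₁ := by
      intro x hx
      have hxF : x ∈ F := hAF (mem_insert_of_mem hx)
      have hxa : x ≠ a := fun h => ha (h ▸ hx)
      exact mem_insert_of_mem (mem_erase.2 ⟨hxa, hxF⟩)
    have hcond' : ∀ x ∈ A', 1 ≤ ψ x ∧ ψ x < x ∧ ψ x ∉ F₁ := by
      intro x hx
      obtain ⟨h1, h2, h3⟩ := hcond x (mem_insert_of_mem hx)
      refine ⟨h1, h2, ?_⟩
      intro hmem
      rcases mem_insert.1 hmem with h | h
      · have : x = a := hinj (mem_insert_of_mem hx) (mem_insert_self a A') h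
        exact ha (this ▸ hx)
      · exact h3 (erase_subset _ _ h)
    have hinj' : Set.InjOn ψ A' := hinj.mono (by intro x hx; exact mem_insert_of_mem hx)
    have hres := ih F₁ hF₁mem hA'F₁ hcond' hinj'
    have heq : (F₁ \ A') ∪ A'.image ψ = (F \ insert a A') ∪ (insert a A').image ψ := by
      ext x
      simp only [mem_union, mem_sdiff, hF₁, mem_insert, mem_erase, mem_image]
      constructor
      · rintro (⟨(rfl | ⟨hxa, hxF⟩), hxA'⟩ | ⟨y, hy, rfl⟩)
        · exact Or.inr ⟨a, Or.inl rfl, rfl⟩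
        · exact Or.inl ⟨hxF, by tauto⟩
        · exact Or.inr ⟨y, Or.inr hy, rfl⟩
      · rintro (⟨hxF, hxA⟩ | ⟨y, (rfl | hy), rfl⟩)
        · have hxa : x ≠ a := by tauto
          have hxA' : x ∉ A' := by tauto
          exact Or.inl ⟨Or.inr ⟨hxa, hxF⟩, hxA'⟩
        · exact Or.inl ⟨Or.inl rfl, fun h => hψ3 (hAF (mem_insert_of_mem h))⟩
        · exact Or.inr ⟨y, hy, rfl⟩
    rwa [heq] at hres

noncomputable def wfam (𝓕 : Finset (Finset ℕ)) : ℕ := ∑ F ∈ 𝓕, ∑ x ∈ F, x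

lemma cfam_weight {i j : ℕ} (hij : i < j) (𝓕 : Finset (Finset ℕ))
    (hmoved : ∃ F ∈ 𝓕, j ∈ F ∧ i ∉ F ∧ cmps i j F ∉ 𝓕) :
    wfam (cfam i j 𝓕) < wfam 𝓕 := by
  classical
  set w : Finset ℕ → ℕ := fun F => ∑ x ∈ F, x with hw
  have hsplit : wfam 𝓕 = ∑ F ∈ 𝓕.filter (fun F => cmps i j F ∈ 𝓕), w F
      + ∑ F ∈ 𝓕.filter (fun F => cmps i j F ∉ 𝓕), w F := by
    unfold wfam
    rw [Finset.sum_filter_add_sum_filter_not]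
  have hdisj : Disjoint (𝓕.filter (fun F => cmps i j F ∈ 𝓕))
      ((𝓕.filter (fun F => cmps i j F ∉ 𝓕)).image (cmps i j)) := by
    rw [Finset.disjoint_right]
    intro X hX
    obtain ⟨F, hF, rfl⟩ := Finset.mem_image.1 hX
    simp only [Finset.mem_filter] at hF ⊢
    intro hc
    exact hF.2 hc.1
  have hcsplit : wfam (cfam i j 𝓕) = ∑ F ∈ 𝓕.filter (fun F => cmps i j F ∈ 𝓕), w F
      + ∑ F ∈ 𝓕.filter (fun F => cmps i j F ∉ 𝓕), w (cmps i j F) := by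
    unfold wfam cfam
    rw [Finset.sum_union hdisj]
    congr 1
    rw [Finset.sum_image]
    intro F1 h1 F2 h2 hEq
    simp only [Finset.mem_coe, Finset.mem_filter] at h1 h2
    obtain ⟨hj1, hi1⟩ := cmps_cond h1.1 h1.2
    obtain ⟨hj2, hi2⟩ := cmps_cond h2.1 h2.2
    rw [← cmps_recover (by omega) hj1 hi1, ← cmps_recover (by omega) hj2 hi2, hEq]
  rw [hsplit, hcsplit]
  apply Nat.add_lt_add_left
  apply Finset.sum_lt_sum_of_nonempty
  · obtain ⟨F, hF, hjF, hiF, hc⟩ := hmoved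
    exact ⟨F, Finset.mem_filter.2 ⟨hF, hc⟩⟩
  · intro F hF
    simp only [Finset.mem_filter] at hF
    obtain ⟨hjF, hiF⟩ := cmps_cond hF.1 hF.2
    unfold cmps
    rw [if_pos ⟨hjF, hiF⟩]
    simp only [hw]
    rw [Finset.sum_insert (by simp only [Finset.mem_erase]; tauto)]
    have : ∑ x ∈ F.erase j, x + j = ∑ x ∈ F, x := Finset.sum_erase_add F _ hjF
    omega

lemma exists_shifted (r t n k : ℕ) (hr : 0 < r) :
    ∀ (N : ℕ) (𝓕 : Finset (Finset ℕ)), wfam 𝓕 ≤ N →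
      𝓕 ⊆ Finset.powersetCard k (Finset.Icc 1 n) → RwiseIntersecting r t 𝓕 →
      ∃ 𝓖, 𝓖 ⊆ Finset.powersetCard k (Finset.Icc 1 n) ∧ RwiseIntersecting r t 𝓖 ∧
        𝓖.card = 𝓕.card ∧ Shifted 𝓖 := by
  intro N
  induction N with
  | zero =>
    intro 𝓕 hN hsub hint
    by_cases hsh : Shifted 𝓕
    · exact ⟨𝓕, hsub, hint, rfl, hsh⟩
    · exfalso
      unfold Shifted at hsh
      push_neg at hsh
      obtain ⟨F, hF, a, haF, b, hb1, hba, hbF, hviol⟩ := hsh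
      have hc : cmps b a F ∉ 𝓕 := by
        unfold cmps
        rw [if_pos ⟨haF, hbF⟩]
        exact hviol
      have := cfam_weight hba 𝓕 ⟨F, hF, haF, hbF, hc⟩
      omega
  | succ N ih =>
    intro 𝓕 hN hsub hint
    by_cases hsh : Shifted 𝓕
    · exact ⟨𝓕, hsub, hint, rfl, hsh⟩
    · unfold Shifted at hsh
      push_neg at hsh
      obtain ⟨F, hF, a, haF, b, hb1, hba, hbF, hviol⟩ := hsh
      have hc : cmps b a F ∉ 𝓕 := by
        unfold cmps
        rw [if_pos ⟨haF, hbF⟩]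
        exact hviol
      have hwlt := cfam_weight hba 𝓕 ⟨F, hF, haF, hbF, hc⟩
      have han : a ≤ n := by
        have := hsub hF
        rw [Finset.mem_powersetCard] at this
        have := this.1 haF
        simp only [Finset.mem_Icc] at this
        omega
      obtain ⟨𝓖, h1, h2, h3, h4⟩ := ih (cfam b a 𝓕) (by omega)
        (cfam_subset hb1 (by omega) 𝓕 hsub) (cfam_rwise hr (by omega) 𝓕 hint)
      exact ⟨𝓖, h1, h2, by rw [h3, cfam_card (by omega) 𝓕], h4⟩

theorem walk_lemma (r t n k : ℕ) (hr : 3 ≤ r) (ht : 1 ≤ t)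
    (𝓕 : Finset (Finset ℕ)) (h𝓕 : 𝓕 ⊆ Finset.powersetCard k (Finset.Icc 1 n))
    (hS : Shifted 𝓕) (hint : RwiseIntersecting r t 𝓕)
    (F : Finset ℕ) (hF : F ∈ 𝓕) : HitsFrom r t 0 n F := by
  by_contra hnot
  have hr0 : 0 < r := by omega
  have hnot' : ∀ m ≤ n, r * ((F ∩ Finset.Icc 1 m).card) < (r-1)*m + t := by
    intro m hm
    by_contra hc
    push_neg at hc
    exact hnot ⟨m, hm, by simpa using hc⟩
  have hFP := h𝓕 hF
  rw [Finset.mem_powersetCard] at hFP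
  obtain ⟨hFsub, hFcard⟩ := hFP
  set idx : ℕ → ℕ := fun x => (F ∩ Finset.Icc 1 x).card with hidx
  set gaps := Finset.Icc 1 n \ F with hgaps
  set cc : ℕ → ℕ := fun y => (gaps ∩ Finset.Icc 1 y).card with hcc
  have hxmem : ∀ x ∈ F, 1 ≤ x ∧ x ≤ n := by
    intro x hx
    have := hFsub hx
    simpa using this
  have hidx_pos : ∀ x ∈ F, 1 ≤ idx x := by
    intro x hx
    apply Finset.card_pos.2
    exact ⟨x, Finset.mem_inter.2 ⟨hx, Finset.mem_Icc.2 ⟨(hxmem x hx).1, le_refl _⟩⟩⟩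
  have hidx_strict : ∀ x ∈ F, ∀ y ∈ F, x < y → idx x < idx y := by
    intro x hx y hy hxy
    have hsub2 : F ∩ Finset.Icc 1 x ⊆ (F ∩ Finset.Icc 1 y).erase y := by
      intro z hz
      simp only [Finset.mem_inter, Finset.mem_Icc] at hz
      simp only [Finset.mem_erase, Finset.mem_inter, Finset.mem_Icc]
      exact ⟨by omega, hz.1, hz.2.1, by omega⟩
    have h1 := Finset.card_le_card hsub2
    rw [Finset.card_erase_of_mem (Finset.mem_inter.2
      ⟨hy, Finset.mem_Icc.2 ⟨(hxmem y hy).1, le_refl _⟩⟩)] at h1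
    have h2 := hidx_pos y hy
    simp only [hidx] at *
    omega
  -- idx step down
  have hidx_pred : ∀ x ∈ F, (F ∩ Finset.Icc 1 (x-1)).card + 1 = idx x := by
    intro x hx
    have h1 : F ∩ Finset.Icc 1 x = insert x (F ∩ Finset.Icc 1 (x-1)) := by
      ext z
      simp only [Finset.mem_inter, Finset.mem_insert, Finset.mem_Icc]
      constructor
      · rintro ⟨hz, h1, h2⟩
        rcases Nat.lt_or_ge z x with h | h
        · exact Or.inr ⟨hz, h1, by omega⟩
        · left; omega
      · rintro (h | ⟨hz, h1, h2⟩)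
        · rw [h]; exact ⟨hx, (hxmem x hx).1, le_refl _⟩
        · exact ⟨hz, h1, by omega⟩
    simp only [hidx]
    rw [h1, Finset.card_insert_of_notMem]
    simp only [Finset.mem_inter, Finset.mem_Icc]
    rintro ⟨_, _, h⟩
    have := (hxmem x hx).1
    omega
  have hcc_idx : ∀ x ∈ F, cc (x-1) + idx x = x := by
    intro x hx
    have hx1 := (hxmem x hx).1
    have hxn := (hxmem x hx).2
    have hpart : Finset.Icc 1 (x-1) = (F ∩ Finset.Icc 1 (x-1)) ∪ (gaps ∩ Finset.Icc 1 (x-1)) := by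
      ext z
      simp only [Finset.mem_union, Finset.mem_inter, hgaps, Finset.mem_sdiff, Finset.mem_Icc]
      constructor
      · intro hz
        by_cases hzF : z ∈ F
        · exact Or.inl ⟨hzF, hz⟩
        · exact Or.inr ⟨⟨⟨hz.1, by omega⟩, hzF⟩, hz⟩
      · rintro (⟨_, h⟩ | ⟨_, h⟩) <;> exact h
    have hdisj : Disjoint (F ∩ Finset.Icc 1 (x-1)) (gaps ∩ Finset.Icc 1 (x-1)) := by
      rw [Finset.disjoint_left]
      intro z hz1 hz2
      simp only [Finset.mem_inter] at hz1 hz2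
      simp only [hgaps, Finset.mem_sdiff] at hz2
      exact hz2.1.2 hz1.1
    have hcard := congrArg Finset.card hpart
    rw [Finset.card_union_of_disjoint hdisj, Nat.card_Icc] at hcard
    have := hidx_pred x hx
    simp only [hcc]
    omega
  have hcc0 : cc 0 = 0 := by
    simp [hcc]
  have hcc_step : ∀ y, 1 ≤ y → cc y ≤ cc (y-1) + 1 ∧ (y ∉ gaps → cc y = cc (y-1)) := by
    intro y hy
    by_cases hyg : y ∈ gaps
    · have h1 : gaps ∩ Finset.Icc 1 y = insert y (gaps ∩ Finset.Icc 1 (y-1)) := by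
        ext z
        simp only [Finset.mem_inter, Finset.mem_insert, Finset.mem_Icc]
        constructor
        · rintro ⟨hz, h1, h2⟩
          rcases Nat.lt_or_ge z y with h | h
          · exact Or.inr ⟨hz, h1, by omega⟩
          · left; omega
        · rintro (rfl | ⟨hz, h1, h2⟩)
          · exact ⟨hyg, hy, le_refl _⟩
          · exact ⟨hz, h1, by omega⟩
      constructor
      · simp only [hcc]
        rw [h1]
        have := Finset.card_insert_le y (gaps ∩ Finset.Icc 1 (y-1))
        omega
      · intro h; exact absurd hyg h
    · have h1 : gaps ∩ Finset.Icc 1 y = gaps ∩ Finset.Icc 1 (y-1) := by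
        ext z
        simp only [Finset.mem_inter, Finset.mem_Icc]
        constructor
        · rintro ⟨hz, hz1, hz2⟩
          refine ⟨hz, hz1, ?_⟩
          rcases Nat.lt_or_ge z y with h | h
          · omega
          · exfalso; have : z = y := by omega
            exact hyg (this ▸ hz)
        · rintro ⟨hz, hz1, hz2⟩
          exact ⟨hz, hz1, by omega⟩
      simp only [hcc]
      rw [h1]
      exact ⟨by omega, fun _ => rfl⟩
  set γ : ℕ → ℕ := fun ℓ => sInf {y | ℓ + 1 ≤ cc y} with hγ
  have γ_facts : ∀ ℓ z, ℓ + 1 ≤ cc z → γ ℓ ≤ z ∧ γ ℓ ∈ gaps ∧ cc (γ ℓ) = ℓ+1 := by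
    intro ℓ z hz
    have hne : {y | ℓ + 1 ≤ cc y}.Nonempty := ⟨z, hz⟩
    have h1 : γ ℓ ≤ z := Nat.sInf_le hz
    have hmem : ℓ + 1 ≤ cc (γ ℓ) := Nat.sInf_mem hne
    have hγ1 : 1 ≤ γ ℓ := by
      by_contra h
      push_neg at h
      have h0 : γ ℓ = 0 := by omega
      rw [h0, hcc0] at hmem
      omega
    have hmin : cc (γ ℓ - 1) ≤ ℓ := by
      have : γ ℓ - 1 < γ ℓ := by omega
      have h2 : γ ℓ - 1 ∉ {y | ℓ + 1 ≤ cc y} := by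
        simp only [hγ] at this ⊢
        exact Nat.notMem_of_lt_sInf this
      simp only [Set.mem_setOf_eq] at h2
      omega
    obtain ⟨hstep1, hstep2⟩ := hcc_step (γ ℓ) hγ1
    have hmemg : γ ℓ ∈ gaps := by
      by_contra h
      have := hstep2 h
      omega
    exact ⟨h1, hmemg, by omega⟩
  -- the key gap-counting bound
  have hgapbound : ∀ x ∈ F, t ≤ idx x → (idx x - t) / (r-1) + 1 ≤ cc (x-1) := by
    intro x hx htx
    set I := idx x with hI
    set j := (I - t) / (r-1) with hj
    set c := (I - t) % (r-1) with hc2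
    have hdm : (r-1) * j + c = I - t := Nat.div_add_mod (I - t) (r-1)
    have hcr : c < r - 1 := Nat.mod_lt _ (by omega)
    have he1 : I = t + ((r-1)*j + c) := by omega
    have hxn := (hxmem x hx).2
    have hH := hnot' x hxn
    -- hH : r * I < (r-1)*x + t
    have he2 : r * I = (r-1) * I + I := by
      calc r * I = ((r-1) + 1) * I := by congr 1; omega
        _ = (r-1)*I + I := by ring
    by_contra hcon
    push_neg at hcon
    -- hcon : cc (x-1) < j + 1, i.e. cc (x-1) ≤ j
    have hccx := hcc_idx x hx
    -- cc (x-1) = x - I, so x ≤ I + j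
    have hxIj : x ≤ I + j := by omega
    have he3 : (r-1) * x ≤ (r-1) * I + (r-1) * j := by
      calc (r-1) * x ≤ (r-1) * (I + j) := Nat.mul_le_mul_left _ hxIj
        _ = (r-1)*I + (r-1)*j := by ring
    rw [he2] at hH
    -- (r-1)*I + I < (r-1)*x + t ≤ (r-1)*I + (r-1)*j + t  ⇒ I < (r-1)*j + t
    -- but I = t + (r-1)*j + c ≥ t + (r-1)*j. contradiction
    omega
  -- the classes and replacement maps
  set ψ : ℕ → ℕ := fun x => γ ((idx x - t) / (r-1)) with hψ
  set A : ℕ → Finset ℕ := fun c => F.filter (fun x => t ≤ idx x ∧ (idx x - t) % (r-1) = c) with hA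
  have hψprop : ∀ c, ∀ x ∈ A c, 1 ≤ ψ x ∧ ψ x < x ∧ ψ x ∉ F := by
    intro c x hxA
    simp only [hA, Finset.mem_filter] at hxA
    obtain ⟨hxF, htx, _⟩ := hxA
    have hgb := hgapbound x hxF htx
    obtain ⟨h1, h2, h3⟩ := γ_facts ((idx x - t)/(r-1)) (x-1) hgb
    have hx1 := (hxmem x hxF).1
    have hgm : ψ x ∈ gaps := h2
    simp only [hgaps, Finset.mem_sdiff, Finset.mem_Icc] at hgm
    exact ⟨hgm.1.1, by simp only [hψ]; omega, hgm.2⟩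
  have hψinj : ∀ c, Set.InjOn ψ (A c) := by
    intro c x hxA y hyA hEq
    simp only [Finset.coe_filter, Set.mem_setOf_eq, hA] at hxA hyA
    obtain ⟨hxF, htx, hcx⟩ := hxA
    obtain ⟨hyF, hty, hcy⟩ := hyA
    by_contra hne
    have hjne : (idx x - t)/(r-1) ≠ (idx y - t)/(r-1) := by
      intro hjeq
      have hdx : (r-1) * ((idx x - t)/(r-1)) + (idx x - t) % (r-1) = idx x - t :=
        Nat.div_add_mod _ _
      have hdy : (r-1) * ((idx y - t)/(r-1)) + (idx y - t) % (r-1) = idx y - t :=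
        Nat.div_add_mod _ _
      rw [hjeq, hcx] at hdx
      rw [hcy] at hdy
      have hIeq : idx x = idx y := by omega
      -- idx injective on F
      rcases Nat.lt_trichotomy x y with h | h | h
      · have := hidx_strict x hxF y hyF h; omega
      · exact hne h
      · have := hidx_strict y hyF x hxF h; omega
    -- γ injective given witnesses
    have hgbx := hgapbound x hxF htx
    have hgby := hgapbound y hyF hty
    obtain ⟨_, _, h3x⟩ := γ_facts ((idx x - t)/(r-1)) (x-1) hgbx
    obtain ⟨_, _, h3y⟩ := γ_facts ((idx y - t)/(r-1)) (y-1) hgby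
    simp only [hψ] at hEq
    rw [hEq] at h3x
    rw [h3y] at h3x
    omega
  set Gc : ℕ → Finset ℕ := fun c => (F \ A c) ∪ (A c).image ψ with hGc
  have hGcmem : ∀ c, Gc c ∈ 𝓕 := by
    intro c
    apply shifted_replace hS ψ (A c) F hF
    · simp only [hA]; exact Finset.filter_subset _ _
    · exact hψprop c
    · exact hψinj c
  set GG : Fin r → Finset ℕ := fun s => if s.val = 0 then F else Gc (s.val - 1) with hGG
  have hGGmem : ∀ s, GG s ∈ 𝓕 := by
    intro s
    simp only [hGG]
    split_ifs
    · exact hF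
    · exact hGcmem _
  rw [rwise_iff r t hr0] at hint
  have hcount := hint GG hGGmem
  -- interFin GG ⊆ small part of F
  have hintersub : interFin r hr0 GG ⊆ F.filter (fun x => idx x < t) := by
    intro x hxI
    rw [mem_interFin] at hxI
    have hxF : x ∈ F := by
      have := hxI ⟨0, hr0⟩
      simpa only [hGG, if_pos rfl] using this
    rw [Finset.mem_filter]
    refine ⟨hxF, ?_⟩
    by_contra hcon
    push_neg at hcon
    set c := (idx x - t) % (r-1) with hc3
    have hcr : c < r - 1 := Nat.mod_lt _ (by omega)
    have hxA : x ∈ A c := by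
      simp only [hA, Finset.mem_filter]
      exact ⟨hxF, hcon, by trivial⟩
    have hxGc := hxI ⟨c+1, by omega⟩
    simp only [hGG] at hxGc
    rw [if_neg (by simp)] at hxGc
    simp only [Nat.add_sub_cancel] at hxGc
    rcases Finset.mem_union.1 hxGc with h | h
    · exact (Finset.mem_sdiff.1 h).2 hxA
    · obtain ⟨y, hy, hyx⟩ := Finset.mem_image.1 h
      have := (hψprop c y hy).2.2
      exact this (hyx ▸ hxF)
  have hsmall : (F.filter (fun x => idx x < t)).card ≤ t - 1 := by
    have : (F.filter (fun x => idx x < t)).card ≤ (Finset.Icc 1 (t-1)).card := by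
      apply Finset.card_le_card_of_injOn idx
      · intro x hx
        simp only [Finset.mem_coe, Finset.mem_filter] at hx
        have := hidx_pos x hx.1
        simp only [Finset.mem_coe, Finset.mem_Icc]
        omega
      · intro x hx y hy hEq
        simp only [Finset.coe_filter, Set.mem_setOf_eq] at hx hy
        by_contra hne
        rcases Nat.lt_trichotomy x y with h | h | h
        · have := hidx_strict x hx.1 y hy.1 h; omega
        · exact hne h
        · have := hidx_strict y hy.1 x hx.1 h; omega
    rw [Nat.card_Icc] at this
    omega
  have := Finset.card_le_card hintersub
  omega

end FranklAux

theorem rwise_intersecting_card_le_alpha_pow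
    (r t : ℕ) (hr : 3 ≤ r) (ht : 1 ≤ t)
    (α : ℝ) (hα0 : 0 < α) (hα1 : α < 1) (hαeq : α = 1 / 2 + α ^ r / 2)
    (n k : ℕ) (hn : 2 * k ≤ n)
    (𝓕 : Finset (Finset ℕ))
    (h𝓕 : 𝓕 ⊆ Finset.powersetCard k (Finset.Icc 1 n))
    (hint : RwiseIntersecting r t 𝓕) :
    (𝓕.card : ℝ) ≤ α ^ t * (Nat.choose n k) := by
  have hr0 : 0 < r := by omega
  have heq : 1 + α^r = 2*α := by linarith [hαeq]
  obtain ⟨𝓖, hGsub, hGint, hGcard, hGsh⟩ :=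
    exists_shifted r t n k hr0 (wfam 𝓕) 𝓕 le_rfl h𝓕 hint
  have hGH : 𝓖 ⊆ ((Finset.Icc 1 n).powersetCard k).filter (HitsFrom r t 0 n) := by
    intro F hFG
    rw [Finset.mem_filter]
    exact ⟨hGsub hFG, walk_lemma r t n k hr ht 𝓖 hGsub hGsh hGint F hFG⟩
  calc (𝓕.card : ℝ) = (𝓖.card : ℝ) := by rw [hGcard]
    _ ≤ ((((Finset.Icc 1 n).powersetCard k).filter (HitsFrom r t 0 n)).card : ℝ) := by
        exact_mod_cast Finset.card_le_card hGH
    _ ≤ α ^ t * (Nat.choose n k) := count_bound r t hr ht α hα0 hα1 heq n k hn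
end

section
/- Let 𝓕 be a nonempty 3-wise t-intersecting family of k-element subsets of [n] with k ≥ t. If t ≥ 4 then |∂^(2)𝓕| > 4·|𝓕|, and if t ≥ 7 then |∂^(4)𝓕| > 16·|𝓕|. -/
open Finset Finset.UV
open scoped FinsetFamily

/-- The `b`-th shadow of a family `𝓕` of `k`-element sets: all `(k−b)`-element sets
contained in some member of `𝓕`. -/
def bShadow (k b : ℕ) (𝓕 : Finset (Finset ℕ)) : Finset (Finset ℕ) :=
  𝓕.biUnion (fun F => Finset.powersetCard (k - b) F)

/-- 3-wise intersecting in concrete form. -/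
private def Int3 (t : ℕ) (𝓖 : Finset (Finset ℕ)) : Prop :=
  ∀ A ∈ 𝓖, ∀ B ∈ 𝓖, ∀ C ∈ 𝓖, t ≤ (A ∩ B ∩ C).card

private lemma iInter3_eq (G : Fin 3 → Finset ℕ) :
    (⋂ i, ((G i : Finset ℕ) : Set ℕ)) = ((G 0 ∩ G 1 ∩ G 2 : Finset ℕ) : Set ℕ) := by
  ext z
  simp only [Set.mem_iInter, Finset.coe_inter, Set.mem_inter_iff, Finset.mem_coe]
  constructor
  · intro h; exact ⟨⟨h 0, h 1⟩, h 2⟩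
  · rintro ⟨⟨h0, h1⟩, h2⟩ i
    fin_cases i <;> assumption

private lemma int3_iff (t : ℕ) (𝓕 : Finset (Finset ℕ)) :
    RwiseIntersecting 3 t 𝓕 ↔ Int3 t 𝓕 := by
  constructor
  · intro h A hA B hB C hC
    have h2 := h ![A, B, C] (by
      intro i; fin_cases i <;> simpa)
    rw [iInter3_eq, Set.ncard_coe_finset] at h2
    simpa using h2
  · intro h G hG
    rw [iInter3_eq, Set.ncard_coe_finset]
    exact h _ (hG 0) _ (hG 1) _ (hG 2)

private def oneShadow (𝒜 : Finset (Finset ℕ)) : Finset (Finset ℕ) :=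
  𝒜.biUnion fun F => F.image (F.erase ·)

private lemma mem_oneShadow {𝒜 : Finset (Finset ℕ)} {E : Finset ℕ} :
    E ∈ oneShadow 𝒜 ↔ ∃ F ∈ 𝒜, ∃ x ∈ F, F.erase x = E := by
  simp [oneShadow]

private lemma mem_bShadow {k b : ℕ} {𝓕 : Finset (Finset ℕ)} {E : Finset ℕ} :
    E ∈ bShadow k b 𝓕 ↔ ∃ F ∈ 𝓕, E ⊆ F ∧ E.card = k - b := by
  simp [bShadow, mem_powersetCard]

private lemma bShadow_zero {k : ℕ} {𝓕 : Finset (Finset ℕ)} {S : Finset ℕ}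
    (h : 𝓕 ⊆ powersetCard k S) : bShadow k 0 𝓕 = 𝓕 := by
  ext E
  rw [mem_bShadow]
  constructor
  · rintro ⟨F, hF, hEF, hcard⟩
    have hFk : F.card = k := (mem_powersetCard.1 (h hF)).2
    have : E = F := eq_of_subset_of_card_le hEF (by omega)
    subst this; exact hF
  · intro hE
    exact ⟨E, hE, Subset.rfl, by simpa using (mem_powersetCard.1 (h hE)).2⟩

private lemma bShadow_succ {k b : ℕ} {𝓕 : Finset (Finset ℕ)} {S : Finset ℕ}
    (h : 𝓕 ⊆ powersetCard k S) (hbk : b + 1 ≤ k) :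
    bShadow k (b + 1) 𝓕 = oneShadow (bShadow k b 𝓕) := by
  ext E
  rw [mem_bShadow, mem_oneShadow]
  constructor
  · rintro ⟨F, hF, hEF, hcard⟩
    have hFk : F.card = k := (mem_powersetCard.1 (h hF)).2
    obtain ⟨E', hEE', hE'F, hE'card⟩ :=
      exists_subsuperset_card_eq hEF (by omega : E.card ≤ k - b) (by omega)
    have : ∃ x, x ∈ E' \ E := by
      refine Nonempty.exists_mem ?_
      rw [← card_pos, card_sdiff_of_subset hEE']
      omega
    obtain ⟨x, hx⟩ := this
    rw [mem_sdiff] at hx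
    refine ⟨E', mem_bShadow.2 ⟨F, hF, hE'F, hE'card⟩, x, hx.1, ?_⟩
    apply (eq_of_subset_of_card_le (fun z hz => mem_erase.2 ⟨fun h => hx.2 (by rwa [h] at hz), hEE' hz⟩) ?_).symm
    rw [card_erase_of_mem hx.1]
    omega
  · rintro ⟨E', hE', x, hxE', rfl⟩
    obtain ⟨F, hF, hE'F, hE'card⟩ := mem_bShadow.1 hE'
    exact ⟨F, hF, (erase_subset _ _).trans hE'F,
      by rw [card_erase_of_mem hxE']; omega⟩

/-- Local LYM with ambient finset S, cancelled denominators. -/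
private lemma local_lym {S : Finset ℕ} {r : ℕ} {𝒜 : Finset (Finset ℕ)}
    (h𝒜 : 𝒜 ⊆ powersetCard r S) :
    𝒜.card * r ≤ (oneShadow 𝒜).card * (S.card - r + 1) := by
  rcases Nat.eq_zero_or_pos r with rfl | hr
  · simp
  rcases 𝒜.eq_empty_or_nonempty with rfl | hne
  · simp [oneShadow]
  have hSr : r ≤ S.card := by
    obtain ⟨F, hF⟩ := hne
    have := mem_powersetCard.1 (h𝒜 hF)
    calc r = F.card := this.2.symm
    _ ≤ S.card := card_le_card this.1
  classical
  set P : Finset (Finset ℕ × ℕ) := 𝒜.biUnion (fun F => F.image fun x => (F.erase x, x)) with hP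
  have hcardP : P.card = 𝒜.card * r := by
    rw [hP, card_biUnion]
    · rw [← sum_const_nat (m := r) (fun F hF => ?_)]
      rw [card_image_of_injOn (fun a _ b _ hab => (Prod.mk.injEq _ _ _ _ ▸ hab).2)]
      exact (mem_powersetCard.1 (h𝒜 hF)).2
    · intro F hF F' hF' hne'
      rw [Function.onFun, disjoint_left]
      rintro ⟨E, x⟩ hx hx'
      simp only [mem_image] at hx hx'
      obtain ⟨a, ha, ha2⟩ := hx
      obtain ⟨b, hb, hb2⟩ := hx'
      rw [Prod.mk.injEq] at ha2 hb2
      apply hne'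
      have h1 : F = insert x E := by
        rw [← ha2.1, ← ha2.2, insert_erase ha]
      have h2 : F' = insert x E := by
        rw [← hb2.1, ← hb2.2, insert_erase hb]
      rw [h1, h2]
  have hsub : P ⊆ (oneShadow 𝒜).biUnion (fun E => (S \ E).image fun x => (E, x)) := by
    rintro ⟨E, x⟩ hx
    simp only [hP, mem_biUnion, mem_image] at hx
    obtain ⟨F, hF, a, ha, ha2⟩ := hx
    rw [Prod.mk.injEq] at ha2
    obtain ⟨hE, rfl⟩ := ha2
    subst hE
    simp only [mem_biUnion, mem_image]
    refine ⟨F.erase a, mem_oneShadow.2 ⟨F, hF, a, ha, rfl⟩, a, ?_, rfl⟩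
    rw [mem_sdiff]
    exact ⟨(mem_powersetCard.1 (h𝒜 hF)).1 ha, notMem_erase _ _⟩
  calc 𝒜.card * r = P.card := hcardP.symm
    _ ≤ ((oneShadow 𝒜).biUnion (fun E => (S \ E).image fun x => (E, x))).card :=
        card_le_card hsub
    _ ≤ ∑ E ∈ oneShadow 𝒜, ((S \ E).image fun x => (E, x)).card := card_biUnion_le
    _ ≤ ∑ E ∈ oneShadow 𝒜, (S.card - r + 1) := by
        refine sum_le_sum fun E hE => ?_
        obtain ⟨F, hF, a, ha, rfl⟩ := mem_oneShadow.1 hE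
        have hFS := mem_powersetCard.1 (h𝒜 hF)
        calc ((S \ F.erase a).image fun x => (F.erase a, x)).card
            ≤ (S \ F.erase a).card := card_image_le
          _ = S.card - (F.erase a).card := card_sdiff_of_subset ((erase_subset _ _).trans hFS.1)
          _ = S.card - r + 1 := by
              rw [card_erase_of_mem ha, hFS.2]
              omega
    _ = (oneShadow 𝒜).card * (S.card - r + 1) := by rw [sum_const, smul_eq_mul]

private lemma bShadow_sub_ppc {k b : ℕ} {𝓕 : Finset (Finset ℕ)} {S : Finset ℕ}
    (h : 𝓕 ⊆ powersetCard k S) :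
    bShadow k b 𝓕 ⊆ powersetCard (k - b) S := by
  intro E hE
  simp only [bShadow, mem_biUnion, mem_powersetCard] at hE ⊢
  obtain ⟨F, hF, hEF, hcard⟩ := hE
  exact ⟨hEF.trans (mem_powersetCard.1 (h hF)).1, hcard⟩

/-- Iterated local LYM chain. -/
private lemma llym_chain {S : Finset ℕ} {k : ℕ} {𝓑 : Finset (Finset ℕ)}
    (h𝓑 : 𝓑 ⊆ powersetCard k S) :
    ∀ b, b ≤ k →
      𝓑.card * ∏ j ∈ range b, (k - j) ≤
        (bShadow k b 𝓑).card * ∏ j ∈ range b, (S.card - k + 1 + j) := by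
  intro b
  induction b with
  | zero => intro _; simp [bShadow_zero h𝓑]
  | succ b ih =>
    intro hbk
    have hb : b ≤ k := by omega
    have h1 := ih hb
    have hsub : bShadow k b 𝓑 ⊆ powersetCard (k - b) S := bShadow_sub_ppc h𝓑
    have h2 := local_lym hsub
    rw [← bShadow_succ h𝓑 hbk] at h2
    rcases Nat.lt_or_ge S.card k with hSk | hSk
    · -- family empty
      have : 𝓑 = ∅ := by
        rw [eq_empty_iff_forall_notMem]
        intro F hF
        have h := mem_powersetCard.1 (h𝓑 hF)
        have := card_le_card h.1
        omega
      subst this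
      simp
    · have hiter : S.card - (k - b) + 1 = S.card - k + 1 + b := by omega
      rw [hiter] at h2
      calc 𝓑.card * ∏ j ∈ range (b+1), (k - j)
          = (𝓑.card * ∏ j ∈ range b, (k - j)) * (k - b) := by
            rw [prod_range_succ]; ring
        _ ≤ ((bShadow k b 𝓑).card * ∏ j ∈ range b, (S.card - k + 1 + j)) * (k - b) :=
            Nat.mul_le_mul_right _ h1
        _ = ((bShadow k b 𝓑).card * (k - b)) * ∏ j ∈ range b, (S.card - k + 1 + j) := by ring
        _ ≤ ((bShadow k (b+1) 𝓑).card * (S.card - k + 1 + b)) * ∏ j ∈ range b, (S.card - k + 1 + j) :=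
            Nat.mul_le_mul_right _ h2
        _ = (bShadow k (b+1) 𝓑).card * ∏ j ∈ range (b+1), (S.card - k + 1 + j) := by
            rw [prod_range_succ]; ring

/-- Base case: small universe, via LLYM chain. -/
private lemma base_case {n k t b i : ℕ} {𝓑 : Finset (Finset ℕ)}
    (h𝓑 : 𝓑 ⊆ powersetCard k (Icc 1 n)) (hne : 𝓑.Nonempty)
    (hik : t + 2 * i ≤ k) (hni : n ≤ t + 3 * i) (hbt : b ≤ t) (ht1 : 1 ≤ t)
    (hnum : ∀ i' k', t + 2 * i' ≤ k' →
      2 ^ b * ∏ j ∈ range b, (i' + 1 + j) < ∏ j ∈ range b, (k' - j)) :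
    2 ^ b * 𝓑.card < (bShadow k b 𝓑).card := by
  have hkn : k ≤ n := by
    obtain ⟨F, hF⟩ := hne
    have h := mem_powersetCard.1 (h𝓑 hF)
    have h2 := card_le_card h.1
    simp [Nat.card_Icc] at h2
    omega
  have hScard : (Icc 1 n).card = n := by simp [Nat.card_Icc]
  have hchain := llym_chain h𝓑 b (by omega)
  rw [hScard] at hchain
  by_contra hcon
  push_neg at hcon
  have hprodle : ∏ j ∈ range b, (n - k + 1 + j) ≤ ∏ j ∈ range b, (i + 1 + j) := by
    refine prod_le_prod' fun j _ => ?_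
    omega
  have hnum' := hnum i k hik
  have hBpos : 0 < 𝓑.card := card_pos.2 hne
  have : 𝓑.card * ∏ j ∈ range b, (k - j) ≤
      (2 ^ b * 𝓑.card) * ∏ j ∈ range b, (i + 1 + j) := by
    calc 𝓑.card * ∏ j ∈ range b, (k - j)
        ≤ (bShadow k b 𝓑).card * ∏ j ∈ range b, (n - k + 1 + j) := hchain
      _ ≤ (2 ^ b * 𝓑.card) * ∏ j ∈ range b, (n - k + 1 + j) := Nat.mul_le_mul_right _ hcon
      _ ≤ (2 ^ b * 𝓑.card) * ∏ j ∈ range b, (i + 1 + j) := Nat.mul_le_mul_left _ hprodle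
  have h2 : ∏ j ∈ range b, (k - j) ≤ 2 ^ b * ∏ j ∈ range b, (i + 1 + j) := by
    have := this
    rw [mul_comm (2^b) 𝓑.card, mul_assoc] at this
    exact Nat.le_of_mul_le_mul_left this hBpos
  omega

private lemma num2 {t : ℕ} (ht : 4 ≤ t) :
    ∀ i' k', t + 2 * i' ≤ k' →
      2 ^ 2 * ∏ j ∈ range 2, (i' + 1 + j) < ∏ j ∈ range 2, (k' - j) := by
  intro i k hik
  have h1 : ∏ j ∈ range 2, (i + 1 + j) = (i+1)*(i+2) := by
    simp [prod_range_succ]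
  have h2 : ∏ j ∈ range 2, (k - j) = k*(k-1) := by
    simp [prod_range_succ]
  rw [h1, h2]
  have hk : 2*i + 4 ≤ k := by omega
  have : (2*i+4) * (2*i+3) ≤ k * (k-1) :=
    Nat.mul_le_mul hk (by omega)
  nlinarith
private lemma num4 {t : ℕ} (ht : 7 ≤ t) :
    ∀ i' k', t + 2 * i' ≤ k' →
      2 ^ 4 * ∏ j ∈ range 4, (i' + 1 + j) < ∏ j ∈ range 4, (k' - j) := by
  intro i k hik
  have h1 : ∏ j ∈ range 4, (i + 1 + j) = (i+1)*(i+2)*(i+3)*(i+4) := by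
    simp [prod_range_succ]
  have h2 : ∏ j ∈ range 4, (k - j) = k*(k-1)*(k-2)*(k-3) := by
    simp [prod_range_succ]
  rw [h1, h2]
  have hk : 2*i + 7 ≤ k := by omega
  have h3 : (2*i+7) * (2*i+6) * (2*i+5) * (2*i+4) ≤ k * (k-1) * (k-2) * (k-3) := by
    have a1 : 2*i+6 ≤ k - 1 := by omega
    have a2 : 2*i+5 ≤ k - 2 := by omega
    have a3 : 2*i+4 ≤ k - 3 := by omega
    exact Nat.mul_le_mul (Nat.mul_le_mul (Nat.mul_le_mul hk a1) a2) a3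
  nlinarith [sq_nonneg i, i.zero_le]

/-- The main structural claim: families in which every member has a full window
have large iterated shadows. -/
private lemma window_claim (t b : ℕ) (htb : b < t)
    (hnum : ∀ i' k', t + 2 * i' ≤ k' →
      2 ^ b * ∏ j ∈ range b, (i' + 1 + j) < ∏ j ∈ range b, (k' - j)) :
    ∀ n k (𝓑 : Finset (Finset ℕ)), 𝓑 ⊆ powersetCard k (Icc 1 n) → 𝓑.Nonempty →
      (∀ F ∈ 𝓑, ∃ i, t + 2 * i ≤ (F ∩ Icc 1 (t + 3 * i)).card) →
      2 ^ b * 𝓑.card < (bShadow k b 𝓑).card := by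
  intro n
  induction n using Nat.strong_induction_on with
  | _ n ih =>
    intro k 𝓑 h𝓑 hne hS
    by_cases hbase : ∃ i, t + 2 * i ≤ k ∧ n ≤ t + 3 * i
    · obtain ⟨i, hik, hni⟩ := hbase
      exact base_case h𝓑 hne hik hni (by omega) (by omega) hnum
    · push_neg at hbase
      -- every member has its window strictly below n
      have hwit : ∀ F ∈ 𝓑, ∃ i, t + 2 * i ≤ (F ∩ Icc 1 (t + 3 * i)).card ∧ t + 3 * i < n := by
        intro F hF
        obtain ⟨i, hi⟩ := hS F hF
        have hFk : F.card = k := (mem_powersetCard.1 (h𝓑 hF)).2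
        have h1 : (F ∩ Icc 1 (t + 3 * i)).card ≤ k := by
          rw [← hFk]; exact card_le_card inter_subset_left
        exact ⟨i, hi, hbase i (by omega)⟩
      have hn1 : 1 ≤ n := by
        obtain ⟨F, hF⟩ := hne
        obtain ⟨i, hi, hin⟩ := hwit F hF
        omega
      have htk : t ≤ k := by
        obtain ⟨F, hF⟩ := hne
        obtain ⟨i, hi, _⟩ := hwit F hF
        have hFk : F.card = k := (mem_powersetCard.1 (h𝓑 hF)).2
        have : (F ∩ Icc 1 (t + 3 * i)).card ≤ k := by
          rw [← hFk]; exact card_le_card inter_subset_left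
        omega
      set 𝓑₀ := 𝓑.filter (fun F => n ∉ F) with h𝓑₀def
      set 𝓑₁ := (𝓑.filter (fun F => n ∈ F)).image (fun F => F.erase n) with h𝓑₁def
      have hSicc : ∀ {F : Finset ℕ}, F ⊆ Icc 1 n → n ∉ F → F ⊆ Icc 1 (n - 1) := by
        intro F hFn hnF z hz
        have h1 := hFn hz
        rw [mem_Icc] at h1 ⊢
        have : z ≠ n := fun h => hnF (h ▸ hz)
        omega
      have hcard1 : 𝓑₁.card = (𝓑.filter (fun F => n ∈ F)).card := by
        refine card_image_of_injOn fun F hF F' hF' hEq => ?_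
        simp only [mem_coe, mem_filter] at hF hF'
        rw [← insert_erase hF.2, ← insert_erase hF'.2, hEq]
      have hsplit : 𝓑.card = 𝓑₀.card + 𝓑₁.card := by
        rw [hcard1, h𝓑₀def, add_comm]
        exact (card_filter_add_card_filter_not (fun F => n ∈ F)).symm
      have h𝓑₀sub : 𝓑₀ ⊆ powersetCard k (Icc 1 (n - 1)) := by
        intro F hF
        rw [mem_filter] at hF
        have h := mem_powersetCard.1 (h𝓑 hF.1)
        exact mem_powersetCard.2 ⟨hSicc h.1 hF.2, h.2⟩
      have h𝓑₁sub : 𝓑₁ ⊆ powersetCard (k - 1) (Icc 1 (n - 1)) := by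
        intro G hG
        rw [h𝓑₁def, mem_image] at hG
        obtain ⟨F, hF, rfl⟩ := hG
        rw [mem_filter] at hF
        have h := mem_powersetCard.1 (h𝓑 hF.1)
        refine mem_powersetCard.2 ⟨hSicc ((erase_subset _ _).trans h.1) (notMem_erase _ _), ?_⟩
        rw [card_erase_of_mem hF.2, h.2]
      have h𝓑₀S : ∀ F ∈ 𝓑₀, ∃ i, t + 2 * i ≤ (F ∩ Icc 1 (t + 3 * i)).card := by
        intro F hF
        obtain ⟨i, hi, _⟩ := hwit F (mem_of_mem_filter F hF)
        exact ⟨i, hi⟩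
      have h𝓑₁S : ∀ G ∈ 𝓑₁, ∃ i, t + 2 * i ≤ (G ∩ Icc 1 (t + 3 * i)).card := by
        intro G hG
        rw [h𝓑₁def, mem_image] at hG
        obtain ⟨F, hF, rfl⟩ := hG
        rw [mem_filter] at hF
        obtain ⟨i, hi, hin⟩ := hwit F hF.1
        refine ⟨i, ?_⟩
        have : F.erase n ∩ Icc 1 (t + 3 * i) = F ∩ Icc 1 (t + 3 * i) := by
          ext z
          simp only [mem_inter, mem_erase, mem_Icc]
          constructor
          · rintro ⟨⟨_, h2⟩, h3⟩; exact ⟨h2, h3⟩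
          · rintro ⟨h2, h3⟩
            exact ⟨⟨by omega, h2⟩, h3⟩
        rw [this]
        exact hi
      -- shadow pieces
      have hA : bShadow k b 𝓑₀ ⊆ bShadow k b 𝓑 := by
        intro E hE
        rw [mem_bShadow] at hE ⊢
        obtain ⟨F, hF, h1, h2⟩ := hE
        exact ⟨F, mem_of_mem_filter F hF, h1, h2⟩
      have hB : ∀ E' ∈ bShadow (k-1) b 𝓑₁, insert n E' ∈ bShadow k b 𝓑 := by
        intro E' hE'
        rw [mem_bShadow] at hE' ⊢
        obtain ⟨G, hG, h1, h2⟩ := hE'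
        rw [h𝓑₁def, mem_image] at hG
        obtain ⟨F, hF, rfl⟩ := hG
        rw [mem_filter] at hF
        have hnE' : n ∉ E' := fun h => (notMem_erase n F) (h1 h)
        have hkt1 : t ≤ k - 1 := by
          obtain ⟨i, hi⟩ := h𝓑₁S _ (mem_image_of_mem _ (mem_filter.2 hF))
          have := card_le_card (inter_subset_left (s₁ := F.erase n) (s₂ := Icc 1 (t + 3*i)))
          have hc : (F.erase n).card = k - 1 := by
            rw [card_erase_of_mem hF.2, (mem_powersetCard.1 (h𝓑 hF.1)).2]
          omega
        refine ⟨F, hF.1, ?_, ?_⟩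
        · rw [← insert_erase hF.2]
          exact insert_subset_insert _ h1
        · rw [card_insert_of_notMem hnE', h2]
          omega
      -- combine
      rcases (𝓑.filter (fun F => n ∈ F)).eq_empty_or_nonempty with h1e | h1ne
      · -- no member contains n
        have h𝓑eq : 𝓑 ⊆ powersetCard k (Icc 1 (n - 1)) := by
          intro F hF
          have hnF : n ∉ F := by
            intro hn
            have : F ∈ 𝓑.filter (fun F => n ∈ F) := mem_filter.2 ⟨hF, hn⟩
            simp [h1e] at this
          have h := mem_powersetCard.1 (h𝓑 hF)
          exact mem_powersetCard.2 ⟨hSicc h.1 hnF, h.2⟩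
        exact ih (n-1) (by omega) k 𝓑 h𝓑eq hne hS
      · have h𝓑₁ne : 𝓑₁.Nonempty := by
          obtain ⟨F, hF⟩ := h1ne
          exact ⟨F.erase n, mem_image_of_mem _ hF⟩
        have ihB := ih (n-1) (by omega) (k-1) 𝓑₁ h𝓑₁sub h𝓑₁ne h𝓑₁S
        -- image of insert n
        have hBcard : ((bShadow (k-1) b 𝓑₁).image (insert n)).card
            = (bShadow (k-1) b 𝓑₁).card := by
          refine card_image_of_injOn fun E hE E' hE' hEq => ?_
          simp only [mem_coe] at hE hE'
          have hnE : n ∉ E := by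
            obtain ⟨G, hG, h1, _⟩ := mem_bShadow.1 hE
            intro hn
            have := (mem_powersetCard.1 (h𝓑₁sub hG)).1 (h1 hn)
            rw [mem_Icc] at this
            omega
          have hnE' : n ∉ E' := by
            obtain ⟨G, hG, h1, _⟩ := mem_bShadow.1 hE'
            intro hn
            have := (mem_powersetCard.1 (h𝓑₁sub hG)).1 (h1 hn)
            rw [mem_Icc] at this
            omega
          rw [← erase_insert hnE, ← erase_insert hnE', hEq]
        have hdisj : Disjoint (bShadow k b 𝓑₀) ((bShadow (k-1) b 𝓑₁).image (insert n)) := by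
          rw [disjoint_left]
          intro E hE hE'
          obtain ⟨F, hF, h1, _⟩ := mem_bShadow.1 hE
          rw [mem_filter] at hF
          rw [mem_image] at hE'
          obtain ⟨E'', _, rfl⟩ := hE'
          exact hF.2 (h1 (mem_insert_self n E''))
        have hunion : (bShadow k b 𝓑₀) ∪ ((bShadow (k-1) b 𝓑₁).image (insert n))
            ⊆ bShadow k b 𝓑 := by
          intro E hE
          rcases mem_union.1 hE with h | h
          · exact hA h
          · rw [mem_image] at h
            obtain ⟨E', hE', rfl⟩ := h
            exact hB E' hE'
        have hcardun : (bShadow k b 𝓑₀).card + (bShadow (k-1) b 𝓑₁).card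
            ≤ (bShadow k b 𝓑).card := by
          rw [← hBcard, ← card_union_of_disjoint hdisj]
          exact card_le_card hunion
        rcases 𝓑₀.eq_empty_or_nonempty with h0e | h0ne
        · have : 𝓑.card = 𝓑₁.card := by rw [hsplit, h0e]; simp
          rw [this]
          calc 2 ^ b * 𝓑₁.card < (bShadow (k-1) b 𝓑₁).card := ihB
            _ ≤ (bShadow k b 𝓑).card := le_trans (Nat.le_add_left _ _) hcardun
        · have ihA := ih (n-1) (by omega) k 𝓑₀ h𝓑₀sub h0ne h𝓑₀S
          calc 2 ^ b * 𝓑.card = 2 ^ b * 𝓑₀.card + 2 ^ b * 𝓑₁.card := by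
                rw [hsplit]; ring
            _ < (bShadow k b 𝓑₀).card + (bShadow (k-1) b 𝓑₁).card := by
                exact Nat.add_lt_add ihA ihB
            _ ≤ (bShadow k b 𝓑).card := hcardun

private def IsShifted (𝓖 : Finset (Finset ℕ)) : Prop :=
  ∀ ⦃x y : ℕ⦄, 1 ≤ x → x < y → ∀ ⦃G⦄, G ∈ 𝓖 → y ∈ G → x ∉ G →
    insert x (G.erase y) ∈ 𝓖

private lemma sdiff_card_helper {A F : Finset ℕ} :
    (A \ F).card + (F ∩ A).card = A.card := by
  have h1 : A \ F = A \ (F ∩ A) := by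
    ext z; simp only [mem_sdiff, mem_inter]; tauto
  rw [h1, card_sdiff_of_subset inter_subset_right]
  have : (F ∩ A).card ≤ A.card := card_le_card inter_subset_right
  omega

private lemma push_elements {𝓖 : Finset (Finset ℕ)} {n : ℕ} (hsh : IsShifted 𝓖) :
    ∀ (m : ℕ) (F D : Finset ℕ), D.card = m → F ∈ 𝓖 → F ⊆ Icc 1 n → D ⊆ F →
    (∀ x ∈ D, (D ∩ Icc 1 x).card + (F ∩ Icc 1 x).card ≤ x) →
    ∃ F' ∈ 𝓖, F'.card = F.card ∧ F \ D ⊆ F' ∧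
      (∀ z ∈ F', z ∈ F \ D ∨ (z ∉ F ∧ ∃ d ∈ D, z < d)) := by
  intro m
  induction m with
  | zero =>
    intro F D hDcard hF hFn hDF _
    have hD : D = ∅ := card_eq_zero.1 hDcard
    subst hD
    exact ⟨F, hF, rfl, by simp, fun z hz => Or.inl (by simpa using hz)⟩
  | succ m ihm =>
    intro F D hDcard hF hFn hDF hHall
    have hDne : D.Nonempty := by
      rw [← card_pos, hDcard]; omega
    set d := D.max' hDne with hd
    have hdD : d ∈ D := max'_mem _ _
    have hdF : d ∈ F := hDF hdD
    have hd1 : 1 ≤ d := by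
      have := hFn hdF; rw [mem_Icc] at this; exact this.1
    have hdn : d ≤ n := by
      have := hFn hdF; rw [mem_Icc] at this; exact this.2
    have hdIcc : d ∈ Icc 1 d := by rw [mem_Icc]; omega
    set slots := Icc 1 d \ F with hslots
    have hIccd : (Icc 1 d).card = d := by rw [Nat.card_Icc]; omega
    have hcard_d : slots.card + (F ∩ Icc 1 d).card = d := by
      rw [hslots, sdiff_card_helper, hIccd]
    have hDd1 : 1 ≤ (D ∩ Icc 1 d).card := by
      refine card_pos.2 ⟨d, ?_⟩
      rw [mem_inter]; exact ⟨hdD, hdIcc⟩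
    have hHd := hHall d hdD
    have hslots_ne : slots.Nonempty := by
      rw [← card_pos]; omega
    set c := slots.max' hslots_ne with hc
    have hcslots : c ∈ slots := max'_mem _ _
    have hcIcc : c ∈ Icc 1 d := (mem_sdiff.1 hcslots).1
    have hcF : c ∉ F := (mem_sdiff.1 hcslots).2
    have hc1 : 1 ≤ c := (mem_Icc.1 hcIcc).1
    have hcd : c < d := by
      have : c ≤ d := (mem_Icc.1 hcIcc).2
      rcases this.lt_or_eq with h | h
      · exact h
      · exact absurd (h ▸ hdF) hcF
    set F1 := insert c (F.erase d) with hF1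
    have hF1mem : F1 ∈ 𝓖 := hsh hc1 hcd hF hdF hcF
    have hcnoterase : c ∉ F.erase d := fun h => hcF (mem_of_mem_erase h)
    have hF1card : F1.card = F.card := by
      rw [hF1, card_insert_of_notMem hcnoterase, card_erase_of_mem hdF]
      have : 1 ≤ F.card := card_pos.2 ⟨d, hdF⟩
      omega
    have hF1n : F1 ⊆ Icc 1 n := by
      rw [hF1]
      refine insert_subset ?_ ((erase_subset _ _).trans hFn)
      rw [mem_Icc]; exact ⟨hc1, le_trans (mem_Icc.1 hcIcc).2 hdn⟩
    set D' := D.erase d with hD'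
    have hD'card : D'.card = m := by
      rw [hD', card_erase_of_mem hdD, hDcard]; omega
    have hD'F1 : D' ⊆ F1 := by
      intro z hz
      rw [hD', mem_erase] at hz
      rw [hF1, mem_insert]
      exact Or.inr (mem_erase.2 ⟨hz.1, hDF hz.2⟩)
    -- Hall condition for F1, D'
    have hHall' : ∀ x ∈ D', (D' ∩ Icc 1 x).card + (F1 ∩ Icc 1 x).card ≤ x := by
      intro x hx
      have hxD : x ∈ D := mem_of_mem_erase hx
      have hxd : x < d := by
        have h1 : x ≤ d := le_max' _ _ hxD
        have h2 : x ≠ d := (mem_erase.1 hx).1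
        omega
      have hDeq : D' ∩ Icc 1 x = D ∩ Icc 1 x := by
        ext z
        rw [hD']
        simp only [mem_inter, mem_erase, mem_Icc]
        constructor
        · rintro ⟨⟨_, h1⟩, h2⟩; exact ⟨h1, h2⟩
        · rintro ⟨h1, h2⟩; exact ⟨⟨by omega, h1⟩, h2⟩
      rw [hDeq]
      rcases Nat.lt_or_ge x c with hxc | hcx
      · -- x < c : F1 ∩ [x] = F ∩ [x]
        have hFeq : F1 ∩ Icc 1 x = F ∩ Icc 1 x := by
          ext z
          rw [hF1]
          simp only [mem_inter, mem_insert, mem_erase, mem_Icc]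
          constructor
          · rintro ⟨h1 | ⟨_, h1⟩, h2⟩
            · omega
            · exact ⟨h1, h2⟩
          · rintro ⟨h1, h2⟩
            exact ⟨Or.inr ⟨by omega, h1⟩, h2⟩
        rw [hFeq]
        exact hHall x hxD
      · -- c ≤ x < d
        have hFeq : F1 ∩ Icc 1 x = insert c (F ∩ Icc 1 x) := by
          ext z
          rw [hF1]
          simp only [mem_inter, mem_insert, mem_erase, mem_Icc]
          constructor
          · rintro ⟨h1 | ⟨h1, h2⟩, h3⟩
            · exact Or.inl h1
            · exact Or.inr ⟨h2, h3⟩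
          · rintro (rfl | ⟨h1, h2⟩)
            · exact ⟨Or.inl rfl, by omega⟩
            · exact ⟨Or.inr ⟨by omega, h1⟩, h2⟩
        have hcnotin : c ∉ F ∩ Icc 1 x := fun h => hcF (mem_inter.1 h).1
        rw [hFeq, card_insert_of_notMem hcnotin]
        -- key: slots ⊆ Icc 1 c, so Icc 1 x \ F = slots
        have hslots_sub : ∀ z ∈ slots, z ≤ c := fun z hz => le_max' _ _ hz
        have hslots_eq : Icc 1 x \ F = slots := by
          ext z
          rw [hslots]
          simp only [mem_sdiff, mem_Icc]
          constructor
          · rintro ⟨⟨h1, h2⟩, h3⟩; exact ⟨⟨h1, by omega⟩, h3⟩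
          · rintro ⟨⟨h1, h2⟩, h3⟩
            have : z ≤ c := hslots_sub z (by rw [hslots]; simp only [mem_sdiff, mem_Icc]; exact ⟨⟨h1, h2⟩, h3⟩)
            exact ⟨⟨h1, by omega⟩, h3⟩
        have hcard_x : (Icc 1 x \ F).card + (F ∩ Icc 1 x).card = x := by
          rw [sdiff_card_helper, Nat.card_Icc]; omega
        rw [hslots_eq] at hcard_x
        -- (D ∩ [x]).card + 1 ≤ (D ∩ [d]).card
        have hDx : (D ∩ Icc 1 x).card + 1 ≤ (D ∩ Icc 1 d).card := by
          have hss : D ∩ Icc 1 x ⊂ D ∩ Icc 1 d := by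
            refine ⟨fun z hz => ?_, fun hcont => ?_⟩
            · rw [mem_inter, mem_Icc] at hz ⊢
              exact ⟨hz.1, by omega⟩
            · have : d ∈ D ∩ Icc 1 x := hcont (mem_inter.2 ⟨hdD, hdIcc⟩)
              rw [mem_inter, mem_Icc] at this
              omega
          exact card_lt_card hss
        omega
    obtain ⟨F', hF'G, hF'card, hF'sub, hF'avoid⟩ :=
      ihm F1 D' hD'card hF1mem hF1n hD'F1 hHall'
    refine ⟨F', hF'G, by rw [hF'card, hF1card], ?_, ?_⟩
    · intro z hz
      rw [mem_sdiff] at hz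
      refine hF'sub (mem_sdiff.2 ⟨?_, ?_⟩)
      · rw [hF1, mem_insert]
        refine Or.inr (mem_erase.2 ⟨fun h => hz.2 (h ▸ hdD), hz.1⟩)
      · rw [hD', mem_erase]
        rintro ⟨_, h2⟩
        exact hz.2 h2
    · intro z hz
      rcases hF'avoid z hz with h | ⟨hzF1, d', hd'D', hzd'⟩
      · rw [mem_sdiff, hF1, mem_insert, hD', mem_erase] at h
        obtain ⟨hc1' | hzer, hzD'⟩ := h
        · subst hc1'
          exact Or.inr ⟨hcF, d, hdD, hcd⟩
        · refine Or.inl (mem_sdiff.2 ⟨hzer.2, fun hzD => ?_⟩)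
          exact hzD' (mem_erase.2 ⟨hzer.1, hzD⟩)
      · have hzd : z < d := by
          have : d' ≤ d := le_max' _ _ (mem_of_mem_erase hd'D')
          omega
        have hzF : z ∉ F := by
          intro hzF
          apply hzF1
          rw [hF1, mem_insert]
          exact Or.inr (mem_erase.2 ⟨by omega, hzF⟩)
        exact Or.inr ⟨hzF, d', mem_of_mem_erase hd'D', hzd'⟩

private lemma count_parity {t σ : ℕ} (ht : 1 ≤ t) (hσ : σ < 2) :
    ∀ s, ((Icc 1 s).filter (fun s' => t ≤ s' ∧ (s' - t) % 2 = σ)).card =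
      if s < t + σ then 0 else (s - t - σ) / 2 + 1 := by
  intro s
  induction s with
  | zero =>
    rw [show (Icc 1 0 : Finset ℕ) = ∅ by simp, filter_empty, card_empty,
      if_pos (by omega)]
  | succ s ih =>
    have hins : Icc 1 (s+1) = insert (s+1) (Icc 1 s) := by
      ext z; simp only [mem_Icc, mem_insert]; omega
    rw [hins, filter_insert]
    by_cases hc : t ≤ s + 1 ∧ (s + 1 - t) % 2 = σ
    · rw [if_pos hc, card_insert_of_notMem (fun h => by
        have := mem_Icc.1 (mem_of_mem_filter _ h); omega), ih]
      obtain ⟨h1, h2⟩ := hc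
      have e1 := Nat.div_add_mod (s + 1 - t) 2
      have e2 := Nat.div_add_mod (s - t - σ) 2
      have e3 := Nat.div_add_mod (s + 1 - t - σ) 2
      by_cases hst : s < t + σ
      · rw [if_pos hst, if_neg (by omega)]
        omega
      · rw [if_neg hst, if_neg (by omega)]
        omega
    · rw [if_neg hc, ih]
      rcases Nat.lt_or_ge (s+1) (t + σ) with h | h
      · rw [if_pos (by omega), if_pos h]
      · rw [if_neg (by omega), if_neg (by omega)]
        have e1 := Nat.div_add_mod (s + 1 - t) 2
        have e2 := Nat.div_add_mod (s - t - σ) 2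
        have e3 := Nat.div_add_mod (s + 1 - t - σ) 2
        have e4 : (s + 1 - t) % 2 < 2 := Nat.mod_lt _ (by omega)
        omega

private lemma shifted_window {n t : ℕ} {𝓖 : Finset (Finset ℕ)} (hsh : IsShifted 𝓖)
    (hint : Int3 t 𝓖) (ht1 : 1 ≤ t) {F : Finset ℕ} (hF : F ∈ 𝓖) (hFn : F ⊆ Icc 1 n) :
    ∃ i, t + 2 * i ≤ (F ∩ Icc 1 (t + 3 * i)).card := by
  by_contra hcon
  push_neg at hcon
  set rank : ℕ → ℕ := fun x => (F ∩ Icc 1 x).card with hrank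
  have hF1le : ∀ x ∈ F, 1 ≤ x ∧ x ≤ n := by
    intro x hx; exact mem_Icc.1 (hFn hx)
  have hrank1 : ∀ x ∈ F, 1 ≤ rank x := by
    intro x hx
    refine card_pos.2 ⟨x, mem_inter.2 ⟨hx, mem_Icc.2 ⟨(hF1le x hx).1, le_rfl⟩⟩⟩
  have hrankmono : ∀ {x y}, x ≤ y → rank x ≤ rank y := by
    intro x y hxy
    exact card_le_card (fun z hz => mem_inter.2
      ⟨(mem_inter.1 hz).1, mem_Icc.2 ⟨(mem_Icc.1 (mem_inter.1 hz).2).1,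
        le_trans (mem_Icc.1 (mem_inter.1 hz).2).2 hxy⟩⟩)
  have hrankstrict : ∀ {x y}, x ∈ F → y ∈ F → x < y → rank x < rank y := by
    intro x y hx hy hxy
    refine card_lt_card ⟨fun z hz => mem_inter.2 ⟨(mem_inter.1 hz).1,
      mem_Icc.2 ⟨(mem_Icc.1 (mem_inter.1 hz).2).1, by
        have := (mem_Icc.1 (mem_inter.1 hz).2).2; omega⟩⟩, fun hss => ?_⟩
    have : y ∈ F ∩ Icc 1 x := hss (mem_inter.2 ⟨hy, mem_Icc.2 ⟨(hF1le y hy).1, le_rfl⟩⟩)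
    have := (mem_Icc.1 (mem_inter.1 this).2).2
    omega
  have hrankinj : ∀ {x y}, x ∈ F → y ∈ F → rank x = rank y → x = y := by
    intro x y hx hy hxy
    rcases Nat.lt_trichotomy x y with h | h | h
    · have := hrankstrict hx hy h; omega
    · exact h
    · have := hrankstrict hy hx h; omega
  -- deficiency contrapositive
  have hdefic : ∀ i, ∀ x ∈ F, t + 2 * i ≤ rank x → t + 3 * i + 1 ≤ x := by
    intro i x hx hrx
    by_contra hxle
    push_neg at hxle
    have h1 : rank x ≤ (F ∩ Icc 1 (t + 3 * i)).card := by
      apply hrankmono; omega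
    have := hcon i
    omega
  -- predecessor
  have hpred : ∀ x ∈ F, 2 ≤ rank x → ∃ y ∈ F, y < x ∧ rank y + 1 = rank x := by
    intro x hx h2
    have hx1 : 1 ≤ x := (hF1le x hx).1
    have hsplit : F ∩ Icc 1 x = insert x (F ∩ Icc 1 (x - 1)) := by
      ext z
      simp only [mem_inter, mem_insert, mem_Icc]
      constructor
      · rintro ⟨h1, h2', h3⟩
        rcases Nat.lt_or_ge z x with h | h
        · exact Or.inr ⟨h1, by omega⟩
        · exact Or.inl (by omega)
      · rintro (rfl | ⟨h1, h2', h3⟩)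
        · exact ⟨hx, by omega⟩
        · exact ⟨h1, by omega, by omega⟩
    have hxnot : x ∉ F ∩ Icc 1 (x - 1) := by
      intro h
      have := (mem_Icc.1 (mem_inter.1 h).2).2
      omega
    have hcardsplit : rank x = (F ∩ Icc 1 (x-1)).card + 1 := by
      rw [hrank]
      simp only
      rw [hsplit, card_insert_of_notMem hxnot]
    have hne : (F ∩ Icc 1 (x-1)).Nonempty := by
      rw [← card_pos]; omega
    set y := (F ∩ Icc 1 (x-1)).max' hne with hy
    have hymem : y ∈ F ∩ Icc 1 (x-1) := max'_mem _ _
    have hyF : y ∈ F := (mem_inter.1 hymem).1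
    have hyx : y < x := by
      have := (mem_Icc.1 (mem_inter.1 hymem).2).2
      omega
    refine ⟨y, hyF, hyx, ?_⟩
    have heq : F ∩ Icc 1 y = F ∩ Icc 1 (x-1) := by
      apply eq_of_subset_of_card_le
      · intro z hz
        refine mem_inter.2 ⟨(mem_inter.1 hz).1, mem_Icc.2
          ⟨(mem_Icc.1 (mem_inter.1 hz).2).1, ?_⟩⟩
        have h1 := (mem_Icc.1 (mem_inter.1 hz).2).2
        have h2 := (mem_Icc.1 (mem_inter.1 hymem).2).2
        omega
      · -- card (F ∩ Icc 1 (x-1)) ≤ card (F ∩ Icc 1 y)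
        refine card_le_card fun z hz => ?_
        refine mem_inter.2 ⟨(mem_inter.1 hz).1, mem_Icc.2
          ⟨(mem_Icc.1 (mem_inter.1 hz).2).1, ?_⟩⟩
        exact le_max' _ _ hz
    have : rank y = (F ∩ Icc 1 (x-1)).card := by
      rw [hrank]; simp only; rw [heq]
    omega
  -- key bound
  have hkey : ∀ x ∈ F, t ≤ rank x →
      t + 3 * ((rank x - t) / 2) + 1 + (rank x - t) % 2 ≤ x := by
    intro x hx hts
    set s := rank x with hs
    have hmod : s - t = 2 * ((s - t)/2) + (s - t) % 2 := (Nat.div_add_mod _ 2).symm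
    rcases Nat.lt_or_ge (s - t) 2 with hcase | hcase
    all_goals {
      rcases Nat.eq_zero_or_pos ((s - t) % 2) with hρ | hρ
      · -- even case
        have : t + 2 * ((s - t)/2) ≤ rank x := by omega
        have := hdefic ((s-t)/2) x hx this
        omega
      · -- odd case
        have hρ1 : (s - t) % 2 = 1 := by omega
        have h2s : 2 ≤ s := by omega
        obtain ⟨y, hyF, hyx, hyrank⟩ := hpred x hx h2s
        have hyt : t + 2 * ((s - t)/2) ≤ rank y := by omega
        have := hdefic ((s-t)/2) y hyF hyt
        omega
    }
  -- the two halves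
  have hDparts : ∀ σ < 2, ∃ F' ∈ 𝓖, F'.card = F.card ∧
      (F.filter (fun x => ¬(t ≤ rank x ∧ (rank x - t) % 2 = σ))) ⊆ F' ∧
      ∀ z ∈ F', z ∈ F → ¬(t ≤ rank z ∧ (rank z - t) % 2 = σ) := by
    intro σ hσ
    set D := F.filter (fun x => t ≤ rank x ∧ (rank x - t) % 2 = σ) with hD
    have hDF : D ⊆ F := filter_subset _ _
    have hHall : ∀ x ∈ D, (D ∩ Icc 1 x).card + (F ∩ Icc 1 x).card ≤ x := by
      intro x hxD
      rw [hD, mem_filter] at hxD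
      obtain ⟨hxF, hxrank, hxpar⟩ := hxD
      -- compute (D ∩ Icc 1 x).card
      have hDx : D ∩ Icc 1 x =
          (F ∩ Icc 1 x).filter (fun z => t ≤ rank z ∧ (rank z - t) % 2 = σ) := by
        rw [hD]
        ext z
        simp only [mem_inter, mem_filter]
        tauto
      have himg : (F ∩ Icc 1 x).image rank = Icc 1 (rank x) := by
        apply eq_of_subset_of_card_le
        · intro s' hs'
          rw [mem_image] at hs'
          obtain ⟨z, hz, rfl⟩ := hs'
          have hzF := (mem_inter.1 hz).1
          have hzx := (mem_Icc.1 (mem_inter.1 hz).2).2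
          exact mem_Icc.2 ⟨hrank1 z hzF, hrankmono hzx⟩
        · rw [Nat.card_Icc, card_image_of_injOn
            (fun a ha b hb hab => hrankinj (mem_inter.1 ha).1 (mem_inter.1 hb).1 hab)]
          simp [hrank]
      have hcardDx : (D ∩ Icc 1 x).card =
          ((Icc 1 (rank x)).filter (fun s' => t ≤ s' ∧ (s' - t) % 2 = σ)).card := by
        rw [hDx, ← himg, filter_image]
        rw [card_image_of_injOn (fun a ha b hb hab =>
          hrankinj (mem_inter.1 (mem_of_mem_filter _ ha)).1
            (mem_inter.1 (mem_of_mem_filter _ hb)).1 hab)]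
      rw [hcardDx, count_parity ht1 hσ]
      have hkx := hkey x hxF hxrank
      have hmod : rank x - t = 2 * ((rank x - t)/2) + (rank x - t) % 2 :=
        (Nat.div_add_mod _ 2).symm
      rw [if_neg (by omega)]
      have e1 := Nat.div_add_mod (rank x - t) 2
      have e2 := Nat.div_add_mod (rank x - t - σ) 2
      have hfx : (F ∩ Icc 1 x).card = rank x := rfl
      omega
    obtain ⟨F', hF'G, hF'card, hF'sub, hF'avoid⟩ :=
      push_elements hsh D.card F D rfl hF hFn hDF hHall
    refine ⟨F', hF'G, hF'card, ?_, ?_⟩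
    · intro z hz
      rw [mem_filter] at hz
      refine hF'sub (mem_sdiff.2 ⟨hz.1, ?_⟩)
      rw [hD, mem_filter]
      tauto
    · intro z hz hzF hcond
      rcases hF'avoid z hz with h | h
      · rw [mem_sdiff, hD, mem_filter] at h
        exact h.2 ⟨hzF, hcond⟩
      · exact h.1 hzF
  obtain ⟨F', hF'G, _, _, hF'avoid⟩ := hDparts 1 (by omega)
  obtain ⟨F'', hF''G, _, _, hF''avoid⟩ := hDparts 0 (by omega)
  -- F ∩ F' ∩ F'' has small card
  have hsub : F ∩ F' ∩ F'' ⊆ F.filter (fun x => rank x < t) := by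
    intro z hz
    rw [mem_inter, mem_inter] at hz
    obtain ⟨⟨hzF, hzF'⟩, hzF''⟩ := hz
    have h1 := hF'avoid z hzF' hzF
    have h0 := hF''avoid z hzF'' hzF
    rw [mem_filter]
    refine ⟨hzF, ?_⟩
    by_contra hge
    push_neg at hge
    rcases Nat.eq_zero_or_pos ((rank z - t) % 2) with h | h
    · exact h0 ⟨hge, h⟩
    · have : (rank z - t) % 2 = 1 := by
        have := Nat.mod_lt (rank z - t) (y := 2) (by omega)
        omega
      exact h1 ⟨hge, this⟩
  have hsmall : (F ∩ F' ∩ F'').card ≤ t - 1 := by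
    calc (F ∩ F' ∩ F'').card ≤ (F.filter (fun x => rank x < t)).card := card_le_card hsub
      _ = ((F.filter (fun x => rank x < t)).image rank).card :=
          (card_image_of_injOn (fun a ha b hb hab =>
            hrankinj (mem_of_mem_filter _ ha) (mem_of_mem_filter _ hb) hab)).symm
      _ ≤ (Icc 1 (t-1)).card := by
          refine card_le_card fun s' hs' => ?_
          rw [mem_image] at hs'
          obtain ⟨z, hz, rfl⟩ := hs'
          rw [mem_filter] at hz
          exact mem_Icc.2 ⟨hrank1 z hz.1, by omega⟩
      _ = t - 1 := by rw [Nat.card_Icc]; omega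
  have := hint F hF F' hF'G F'' hF''G
  omega

variable {x y : ℕ} {𝓖 : Finset (Finset ℕ)}

private lemma compress_eval {g : Finset ℕ} (hxy : x ≠ y) (hyg : y ∈ g) (hxg : x ∉ g) :
    UV.compress {x} {y} g = insert x (g.erase y) := by
  rw [UV.compress, if_pos ⟨by simpa using hxg, by simpa using hyg⟩]
  ext z
  simp only [sup_eq_union, mem_sdiff, mem_union, mem_singleton, mem_insert, mem_erase]
  constructor
  · rintro ⟨h1 | h1, h2⟩
    · exact Or.inr ⟨h2, h1⟩
    · exact Or.inl h1
  · rintro (rfl | ⟨h1, h2⟩)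
    · exact ⟨Or.inr rfl, hxy⟩
    · exact ⟨Or.inl h2, h1⟩

private lemma compress_eval' {g : Finset ℕ} (h : ¬(y ∈ g ∧ x ∉ g)) :
    UV.compress {x} {y} g = g := by
  rw [UV.compress, if_neg]
  rintro ⟨h1, h2⟩
  rw [disjoint_singleton_left] at h1
  exact h ⟨le_iff_subset.mp h2 (mem_singleton_self y), h1⟩

private lemma partner (hxy : x ≠ y) {H : Finset ℕ} (hH : H ∈ 𝓒 {x} {y} 𝓖) :
    ∃ G ∈ 𝓖, (∀ z, z ≠ x → z ≠ y → z ∈ G → z ∈ H) ∧ (y ∈ G → x ∈ H) ∧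
      (H ∉ 𝓖 → x ∉ G) := by
  rcases UV.mem_compression.1 hH with ⟨hH𝓖, hcH⟩ | ⟨hH𝓖, g, hg𝓖, hcg⟩
  · by_cases hpat : y ∈ H ∧ x ∉ H
    · refine ⟨UV.compress {x} {y} H, hcH, ?_, ?_, fun h => absurd hH𝓖 h⟩
      · rw [compress_eval hxy hpat.1 hpat.2]
        intro z hzx hzy hz
        rcases mem_insert.1 hz with rfl | hz'
        · exact absurd rfl hzx
        · exact mem_of_mem_erase hz'
      · rw [compress_eval hxy hpat.1 hpat.2]
        intro hy
        rcases mem_insert.1 hy with h | h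
        · exact absurd h.symm hxy
        · exact absurd (mem_of_mem_erase h) (notMem_erase y H ∘ fun _ => h)
    · exact ⟨H, hH𝓖, fun z _ _ hz => hz, fun hy => by tauto, fun h => absurd hH𝓖 h⟩
  · -- H is the strict compression of g
    have hgpat : y ∈ g ∧ x ∉ g := by
      by_contra hpat
      rw [compress_eval' hpat] at hcg
      exact hH𝓖 (hcg ▸ hg𝓖)
    rw [compress_eval hxy hgpat.1 hgpat.2] at hcg
    refine ⟨g, hg𝓖, ?_, fun _ => ?_, fun _ => hgpat.2⟩
    · intro z hzx hzy hz
      rw [← hcg, mem_insert]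
      exact Or.inr (mem_erase.2 ⟨hzy, hz⟩)
    · rw [← hcg]; exact mem_insert_self _ _

private lemma int3_compression (hxy : x ≠ y) (ht : Int3 t 𝓖) :
    Int3 t (𝓒 {x} {y} 𝓖) := by
  intro H1 hH1 H2 hH2 H3 hH3
  by_cases hall : H1 ∈ 𝓖 ∧ H2 ∈ 𝓖 ∧ H3 ∈ 𝓖
  · exact ht H1 hall.1 H2 hall.2.1 H3 hall.2.2
  · obtain ⟨G1, hG1, hp1, hq1, hr1⟩ := partner hxy hH1
    obtain ⟨G2, hG2, hp2, hq2, hr2⟩ := partner hxy hH2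
    obtain ⟨G3, hG3, hp3, hq3, hr3⟩ := partner hxy hH3
    have hxW : x ∉ G1 ∩ G2 ∩ G3 := by
      intro hmem
      have h1 : x ∈ G1 := (mem_inter.1 (mem_inter.1 hmem).1).1
      have h2 : x ∈ G2 := (mem_inter.1 (mem_inter.1 hmem).1).2
      have h3 : x ∈ G3 := (mem_inter.1 hmem).2
      rcases not_and_or.1 hall with h | h
      · exact hr1 h h1
      rcases not_and_or.1 h with h' | h'
      · exact hr2 h' h2
      · exact hr3 h' h3
    set W := G1 ∩ G2 ∩ G3 with hW
    have hWcard : t ≤ W.card := ht G1 hG1 G2 hG2 G3 hG3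
    by_cases hyW : y ∈ W
    · have hy1 : y ∈ G1 := (mem_inter.1 (mem_inter.1 hyW).1).1
      have hy2 : y ∈ G2 := (mem_inter.1 (mem_inter.1 hyW).1).2
      have hy3 : y ∈ G3 := (mem_inter.1 hyW).2
      have hsub : insert x (W.erase y) ⊆ H1 ∩ H2 ∩ H3 := by
        intro z hz
        rcases mem_insert.1 hz with rfl | hz'
        · exact mem_inter.2 ⟨mem_inter.2 ⟨hq1 hy1, hq2 hy2⟩, hq3 hy3⟩
        · have hzy : z ≠ y := (mem_erase.1 hz').1
          have hzW : z ∈ W := mem_of_mem_erase hz'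
          have hzx : z ≠ x := fun h => hxW (h ▸ hzW)
          have hz1 : z ∈ G1 := (mem_inter.1 (mem_inter.1 hzW).1).1
          have hz2 : z ∈ G2 := (mem_inter.1 (mem_inter.1 hzW).1).2
          have hz3 : z ∈ G3 := (mem_inter.1 hzW).2
          exact mem_inter.2 ⟨mem_inter.2 ⟨hp1 z hzx hzy hz1, hp2 z hzx hzy hz2⟩,
            hp3 z hzx hzy hz3⟩
      have hcard : (insert x (W.erase y)).card = W.card := by
        rw [card_insert_of_notMem (fun h => hxW (mem_of_mem_erase h)),
          card_erase_of_mem hyW]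
        have : 1 ≤ W.card := card_pos.2 ⟨y, hyW⟩
        omega
      calc t ≤ W.card := hWcard
        _ = (insert x (W.erase y)).card := hcard.symm
        _ ≤ (H1 ∩ H2 ∩ H3).card := card_le_card hsub
    · have hsub : W ⊆ H1 ∩ H2 ∩ H3 := by
        intro z hzW
        have hzx : z ≠ x := fun h => hxW (h ▸ hzW)
        have hzy : z ≠ y := fun h => hyW (h ▸ hzW)
        have hz1 : z ∈ G1 := (mem_inter.1 (mem_inter.1 hzW).1).1
        have hz2 : z ∈ G2 := (mem_inter.1 (mem_inter.1 hzW).1).2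
        have hz3 : z ∈ G3 := (mem_inter.1 hzW).2
        exact mem_inter.2 ⟨mem_inter.2 ⟨hp1 z hzx hzy hz1, hp2 z hzx hzy hz2⟩,
          hp3 z hzx hzy hz3⟩
      exact le_trans hWcard (card_le_card hsub)

private lemma ppc_compression (hx : x ∈ Icc 1 n) (hxy : x ≠ y)
    (h : 𝓖 ⊆ powersetCard k (Icc 1 n)) :
    𝓒 {x} {y} 𝓖 ⊆ powersetCard k (Icc 1 n) := by
  intro H hH
  rcases UV.mem_compression.1 hH with ⟨hH𝓖, _⟩ | ⟨hH𝓖, g, hg𝓖, hcg⟩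
  · exact h hH𝓖
  · have hg := mem_powersetCard.1 (h hg𝓖)
    have hgpat : y ∈ g ∧ x ∉ g := by
      by_contra hpat
      rw [compress_eval' hpat] at hcg
      exact hH𝓖 (hcg ▸ hg𝓖)
    rw [compress_eval hxy hgpat.1 hgpat.2] at hcg
    subst hcg
    refine mem_powersetCard.2 ⟨insert_subset hx ((erase_subset _ _).trans hg.1), ?_⟩
    rw [card_insert_of_notMem (fun hc => hgpat.2 (mem_of_mem_erase hc)),
      card_erase_of_mem hgpat.1, hg.2]
    have : 1 ≤ g.card := card_pos.2 ⟨y, hgpat.1⟩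
    omega

private lemma iter_shadow_compression_le (hxy : x ≠ y) :
    ∀ b, ((∂ ·)^[b] (𝓒 {x} {y} 𝓖)).card ≤ ((∂ ·)^[b] 𝓖).card := by
  have hsub : ∀ b, (∂ ·)^[b] (𝓒 {x} {y} 𝓖) ⊆ 𝓒 {x} {y} ((∂ ·)^[b] 𝓖) := by
    intro b
    induction b with
    | zero => simp [Function.iterate_zero]
    | succ b ih =>
      rw [Function.iterate_succ_apply', Function.iterate_succ_apply']
      calc ∂ ((∂ ·)^[b] (𝓒 {x} {y} 𝓖)) ⊆ ∂ (𝓒 {x} {y} ((∂ ·)^[b] 𝓖)) :=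
            shadow_monotone ih
        _ ⊆ 𝓒 {x} {y} (∂ ((∂ ·)^[b] 𝓖)) := by
            refine UV.shadow_compression_subset_compression_shadow _ _ ?_
            intro a ha
            rw [mem_singleton] at ha
            subst ha
            exact ⟨y, mem_singleton_self y, by
              rw [erase_singleton, erase_singleton]
              exact UV.isCompressed_self _ _⟩
  intro b
  calc ((∂ ·)^[b] (𝓒 {x} {y} 𝓖)).card ≤ (𝓒 {x} {y} ((∂ ·)^[b] 𝓖)).card :=
        card_le_card (hsub b)
    _ = ((∂ ·)^[b] 𝓖).card := UV.card_compression _ _ _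

private def famMeasure (𝓖 : Finset (Finset ℕ)) : ℕ := ∑ A ∈ 𝓖, ∑ a ∈ A, a

private lemma famMeasure_lt (hxy : x < y) (hne : 𝓒 {x} {y} 𝓖 ≠ 𝓖) :
    famMeasure (𝓒 {x} {y} 𝓖) < famMeasure 𝓖 := by
  have hmoved : filter (fun a => a ∉ 𝓖) (image (UV.compress {x} {y}) 𝓖) =
      image (UV.compress {x} {y}) (filter (fun a => UV.compress {x} {y} a ∉ 𝓖) 𝓖) := by
    ext H
    simp only [mem_filter, mem_image]
    constructor
    · rintro ⟨⟨g, hg, rfl⟩, hH⟩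
      exact ⟨g, ⟨hg, hH⟩, rfl⟩
    · rintro ⟨g, ⟨hg, hcg⟩, rfl⟩
      exact ⟨⟨g, hg, rfl⟩, hcg⟩
  have hMne : (filter (fun a => UV.compress {x} {y} a ∉ 𝓖) 𝓖).Nonempty := by
    rcases (filter (fun a => UV.compress {x} {y} a ∉ 𝓖) 𝓖).eq_empty_or_nonempty with he | hne'
    · exfalso
      apply hne
      rw [UV.compression, hmoved, he, image_empty, union_empty]
      rw [filter_eq_empty_iff] at he
      exact filter_true_of_mem (fun a ha => not_not.1 (he ha))
    · exact hne'
  have hstrict : ∀ a ∈ filter (fun a => UV.compress {x} {y} a ∉ 𝓖) 𝓖,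
      (∑ z ∈ UV.compress {x} {y} a, z) < ∑ z ∈ a, z := by
    intro a ha
    rw [mem_filter] at ha
    have hca : UV.compress {x} {y} a ≠ a := fun h => ha.2 (by rw [h]; exact ha.1)
    have hpat : y ∈ a ∧ x ∉ a := by
      by_contra hpat
      exact hca (compress_eval' hpat)
    rw [compress_eval (by omega) hpat.1 hpat.2,
      sum_insert (fun hmem => hpat.2 (mem_of_mem_erase hmem))]
    have hsum : y + ∑ z ∈ a.erase y, z = ∑ z ∈ a, z :=
      Finset.add_sum_erase a (fun z => z) hpat.1
    omega
  have hsplit : famMeasure 𝓖 =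
      (∑ A ∈ filter (fun a => UV.compress {x} {y} a ∈ 𝓖) 𝓖, ∑ a ∈ A, a) +
      ∑ A ∈ filter (fun a => UV.compress {x} {y} a ∉ 𝓖) 𝓖, ∑ a ∈ A, a := by
    rw [famMeasure, ← sum_union (disjoint_filter_filter_not 𝓖 𝓖 _),
      filter_union_filter_not_eq]
  rw [famMeasure, UV.compression, sum_union UV.compress_disjoint, hmoved, hsplit]
  refine Nat.add_lt_add_left ?_ _
  rw [sum_image (fun a ha b hb hab =>
    UV.compress_injOn (mem_coe.2 (by simpa using ha)) (mem_coe.2 (by simpa using hb)) hab)]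
  exact sum_lt_sum_of_nonempty hMne hstrict

private lemma exists_shifted_s17 {n k t : ℕ} :
    ∀ N (𝓖 : Finset (Finset ℕ)), famMeasure 𝓖 = N →
    𝓖 ⊆ powersetCard k (Icc 1 n) → Int3 t 𝓖 →
    ∃ 𝓗, 𝓗 ⊆ powersetCard k (Icc 1 n) ∧ Int3 t 𝓗 ∧ 𝓗.card = 𝓖.card ∧ IsShifted 𝓗 ∧
      ∀ b, ((∂ ·)^[b] 𝓗).card ≤ ((∂ ·)^[b] 𝓖).card := by
  intro N
  induction N using Nat.strong_induction_on with
  | _ N ih =>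
    intro 𝓖 hN h𝓖 hint
    by_cases hex : ∃ x, ∃ y, (1 ≤ x ∧ x < y ∧ y ≤ n) ∧ 𝓒 {x} {y} 𝓖 ≠ 𝓖
    · obtain ⟨x, y, ⟨hx1, hxy, hyn⟩, hne⟩ := hex
      have hxIcc : x ∈ Icc 1 n := mem_Icc.2 ⟨hx1, by omega⟩
      have hlt : famMeasure (𝓒 {x} {y} 𝓖) < N := hN ▸ famMeasure_lt hxy hne
      obtain ⟨𝓗, h1, h2, h3, h4, h5⟩ := ih (famMeasure (𝓒 {x} {y} 𝓖)) hlt (𝓒 {x} {y} 𝓖)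
        rfl (ppc_compression hxIcc (by omega) h𝓖) (int3_compression (by omega) hint)
      refine ⟨𝓗, h1, h2, ?_, h4, fun b => ?_⟩
      · rw [h3, UV.card_compression]
      · exact le_trans (h5 b) (iter_shadow_compression_le (by omega) b)
    · push_neg at hex
      refine ⟨𝓖, h𝓖, hint, rfl, ?_, fun b => le_rfl⟩
      intro x y hx1 hxy G hG hyG hxG
      have hyn : y ≤ n := by
        have := (mem_powersetCard.1 (h𝓖 hG)).1 hyG
        exact (mem_Icc.1 this).2
      have hcomp := hex x y ⟨hx1, hxy, hyn⟩
      have := UV.compress_mem_compression (u := {x}) (v := {y}) hG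
      rw [hcomp, compress_eval (by omega) hyG hxG] at this
      exact this

private lemma oneShadow_eq_shadow (𝒜 : Finset (Finset ℕ)) : oneShadow 𝒜 = ∂ 𝒜 := by
  ext E
  rw [mem_oneShadow, mem_shadow_iff]

private lemma bShadow_eq_iter {S : Finset ℕ} :
    ∀ b {k : ℕ} {𝓑 : Finset (Finset ℕ)}, 𝓑 ⊆ powersetCard k S → b ≤ k →
      bShadow k b 𝓑 = (∂ ·)^[b] 𝓑 := by
  intro b
  induction b with
  | zero => intro k 𝓑 h _; simpa using bShadow_zero h
  | succ b ih =>
    intro k 𝓑 h hbk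
    rw [bShadow_succ h hbk, Function.iterate_succ_apply', ih h (by omega),
      oneShadow_eq_shadow]

theorem three_wise_shadow_bounds
    (n k t : ℕ) (ht : 1 ≤ t) (hk : t ≤ k)
    (𝓕 : Finset (Finset ℕ)) (hne : 𝓕.Nonempty)
    (h𝓕 : 𝓕 ⊆ Finset.powersetCard k (Finset.Icc 1 n))
    (hint : RwiseIntersecting 3 t 𝓕) :
    (4 ≤ t → 4 * 𝓕.card < (bShadow k 2 𝓕).card) ∧
      (7 ≤ t → 16 * 𝓕.card < (bShadow k 4 𝓕).card) := by
  have hInt : Int3 t 𝓕 := (int3_iff t 𝓕).1 hint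
  obtain ⟨𝓖, h𝓖sub, h𝓖int, h𝓖card, h𝓖sh, h𝓖shadow⟩ :=
    exists_shifted_s17 (famMeasure 𝓕) 𝓕 rfl h𝓕 hInt
  have h𝓖ne : 𝓖.Nonempty := by
    rw [← card_pos, h𝓖card, card_pos]; exact hne
  have hW : ∀ F ∈ 𝓖, ∃ i, t + 2 * i ≤ (F ∩ Icc 1 (t + 3 * i)).card := fun F hF =>
    shifted_window h𝓖sh h𝓖int ht hF (mem_powersetCard.1 (h𝓖sub hF)).1
  constructor
  · intro ht4
    have hb := window_claim t 2 (by omega) (num2 ht4) n k 𝓖 h𝓖sub h𝓖ne hW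
    have e1 : bShadow k 2 𝓖 = (∂ ·)^[2] 𝓖 := bShadow_eq_iter 2 h𝓖sub (by omega)
    have e2 : bShadow k 2 𝓕 = (∂ ·)^[2] 𝓕 := bShadow_eq_iter 2 h𝓕 (by omega)
    calc 4 * 𝓕.card = 2 ^ 2 * 𝓖.card := by rw [h𝓖card]; norm_num
      _ < (bShadow k 2 𝓖).card := hb
      _ = ((∂ ·)^[2] 𝓖).card := by rw [e1]
      _ ≤ ((∂ ·)^[2] 𝓕).card := h𝓖shadow 2
      _ = (bShadow k 2 𝓕).card := by rw [← e2]
  · intro ht7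
    have hb := window_claim t 4 (by omega) (num4 ht7) n k 𝓖 h𝓖sub h𝓖ne hW
    have e1 : bShadow k 4 𝓖 = (∂ ·)^[4] 𝓖 := bShadow_eq_iter 4 h𝓖sub (by omega)
    have e2 : bShadow k 4 𝓕 = (∂ ·)^[4] 𝓕 := bShadow_eq_iter 4 h𝓕 (by omega)
    calc 16 * 𝓕.card = 2 ^ 4 * 𝓖.card := by rw [h𝓖card]; norm_num
      _ < (bShadow k 4 𝓖).card := hb
      _ = ((∂ ·)^[4] 𝓖).card := by rw [e1]
      _ ≤ ((∂ ·)^[4] 𝓕).card := h𝓖shadow 4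
      _ = (bShadow k 4 𝓕).card := by rw [← e2]
end

section
/- Let t ≥ 2 and k ≥ t + 3 be integers and let n be an integer with n ≥ ((√(4t+9) − 1)/2)·k. Then |𝓐₁(n,k,3,t)| < C(n−t, k−t), where 𝓐₁(n,k,3,t) is the family of all k-element subsets A of [n] with |A ∩ [t+3]| ≥ t + 2. -/
/-- The Frankl family `𝓐₁(n,k,r,t)`: all `k`-element subsets `A` of `[n]` with
`|A ∩ [t+r]| ≥ t + r - 1`. -/
def franklFamilyOne (n k r t : ℕ) : Finset (Finset ℕ) :=
  (Finset.powersetCard k (Finset.Icc 1 n)).filter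
    (fun A => t + r - 1 ≤ (A ∩ Finset.Icc 1 (t + r)).card)

lemma pPos {u : ℝ} (hu : 4 ≤ u) : 0 ≤ u^4 - 3*u^3 - 7*u^2 + 15*u - 6 := by
  nlinarith [pow_nonneg (by linarith : (0:ℝ) ≤ u - 4) 2, pow_nonneg (by linarith : (0:ℝ) ≤ u - 4) 3, pow_nonneg (by linarith : (0:ℝ) ≤ u - 4) 4, hu]
lemma qPos {u : ℝ} (hu : 4 ≤ u) : 0 < u^6 - 6*u^5 + 15*u^4 + 12*u^3 - 177*u^2 + 90*u + 65 := by
  nlinarith [pow_nonneg (by linarith : (0:ℝ) ≤ u - 4) 2, pow_nonneg (by linarith : (0:ℝ) ≤ u - 4) 3, pow_nonneg (by linarith : (0:ℝ) ≤ u - 4) 4, pow_nonneg (by linarith : (0:ℝ) ≤ u - 4) 5, pow_nonneg (by linarith : (0:ℝ) ≤ u - 4) 6, hu]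

lemma realIneq {u k y s t : ℝ} (hu : 4 ≤ u) (hu17 : 17 ≤ u^2)
    (ht : t = (u^2 - 9)/4) (hs : s = k - t)
    (hk : u^2 + 3 ≤ 4*k) (hy : (u-3)*k - 2 ≤ 2*y) :
    t*s*(s-1) < y*(y-1) + 3*y*s := by
  subst hs; subst ht
  have hk0 : (5:ℝ) ≤ k := by linarith
  have huk : (0:ℝ) ≤ (u-3)*k := mul_nonneg (by linarith) (by linarith)
  have h1 : (0:ℝ) ≤ 2*y - ((u-3)*k - 2) := by linarith
  have hs3 : (3:ℝ) ≤ k - (u^2-9)/4 := by linarith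
  have h2 : (0:ℝ) ≤ 2*y + ((u-3)*k - 2) + 6*(k - (u^2-9)/4) - 2 := by linarith
  have h3 : (0:ℝ) ≤ 4*k - (u^2+3) := by linarith
  nlinarith [qPos hu, pPos hu, mul_nonneg h1 h2, mul_nonneg h3 (pPos hu)]


open Finset in
lemma frankl_card_le (n k t : ℕ) (hn : t + 3 ≤ n) :
    (franklFamilyOne n k 3 t).card ≤
      Nat.choose (n - t - 3) (k - t - 3) + (t + 3) * Nat.choose (n - t - 3) (k - t - 2) := by
  classical
  set T : Finset ℕ := Finset.Icc 1 (t+3) with hT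
  set G : Finset ℕ := Finset.Icc 1 n with hG
  have hTG : T ⊆ G := Finset.Icc_subset_Icc_right hn
  set U : Finset ℕ := G \ T with hU
  have hUcard : U.card = n - t - 3 := by
    rw [hU, Finset.card_sdiff_of_subset hTG, hT, hG, Nat.card_Icc, Nat.card_Icc]
    omega
  have h0T : (0 : ℕ) ∉ T := by simp [hT]
  set tgt : Finset ((_ : ℕ) × Finset ℕ) :=
    (insert 0 T).sigma (fun i => U.powersetCard (if i = 0 then k - t - 3 else k - t - 2))
    with htgt
  have hle : (franklFamilyOne n k 3 t).card ≤ tgt.card := by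
    apply Finset.card_le_card_of_injOn (fun A => ⟨(T \ A).sum id, A \ T⟩)
    · intro A hA
      rw [Finset.mem_coe, franklFamilyOne, Finset.mem_filter, Finset.mem_powersetCard] at hA
      obtain ⟨⟨hAG, hAk⟩, hAc⟩ := hA
      have hAc' : t + 2 ≤ (A ∩ T).card := by
        have : t + 3 - 1 = t + 2 := by omega
        rwa [this] at hAc
      have hAT : (A ∩ T).card ≤ t + 3 := by
        calc (A ∩ T).card ≤ T.card := Finset.card_le_card inter_subset_right
        _ = t + 3 := by rw [hT, Nat.card_Icc]; omega
      have hsd : (T \ A).card + (T ∩ A).card = T.card := Finset.card_sdiff_add_card_inter T A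
      have hTA : (T ∩ A).card = (A ∩ T).card := by rw [Finset.inter_comm]
      have hsd2 : (A \ T).card + (A ∩ T).card = A.card := Finset.card_sdiff_add_card_inter A T
      have hTcard : T.card = t + 3 := by rw [hT, Nat.card_Icc]; omega
      have hsub : A \ T ⊆ U := by
        intro x hx
        rw [Finset.mem_sdiff] at hx ⊢
        exact ⟨hAG hx.1, hx.2⟩
      rw [Finset.mem_coe, Finset.mem_sigma]
      rcases Nat.lt_or_ge (A ∩ T).card (t+3) with hlt | hge
      · -- exactly t+2, one missing
        have h1 : (T \ A).card = 1 := by omega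
        obtain ⟨i, hi⟩ := Finset.card_eq_one.mp h1
        have hiT : i ∈ T := by
          have : i ∈ T \ A := by rw [hi]; exact Finset.mem_singleton_self i
          exact (Finset.mem_sdiff.mp this).1
        have hi1 : 1 ≤ i := by
          rw [hT, Finset.mem_Icc] at hiT; exact hiT.1
        have hsum : (T \ A).sum id = i := by rw [hi, Finset.sum_singleton]; rfl
        have hif : (if (T \ A).sum id = 0 then k-t-3 else k-t-2) = k-t-2 := by
          rw [hsum, if_neg (by omega)]
        constructor
        · simp only [hsum]; exact Finset.mem_insert_of_mem hiT
        · rw [Finset.mem_powersetCard, hif]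
          exact ⟨hsub, by show (A \ T).card = _; omega⟩
      · have h0 : (T \ A).card = 0 := by omega
        have hsum : (T \ A).sum id = 0 := by
          rw [Finset.card_eq_zero.mp h0]; rfl
        have hif : (if (T \ A).sum id = 0 then k-t-3 else k-t-2) = k-t-3 := by
          rw [hsum, if_pos rfl]
        constructor
        · simp only [hsum]; exact Finset.mem_insert_self 0 _
        · rw [Finset.mem_powersetCard, hif]
          exact ⟨hsub, by show (A \ T).card = _; omega⟩
    · intro A hA B hB hAB
      simp only [Finset.mem_coe] at hA hB
      rw [franklFamilyOne, Finset.mem_filter, Finset.mem_powersetCard] at hA hB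
      have hsum : (T \ A).sum id = (T \ B).sum id := congrArg Sigma.fst hAB
      have hdiff : A \ T = B \ T := by
        have := congrArg Sigma.snd hAB
        simpa using this
      -- card of T \ X ≤ 1 for both
      have key : ∀ X : Finset ℕ, X ⊆ G → X.card = k → t + 3 - 1 ≤ (X ∩ T).card →
          (T \ X).card ≤ 1 ∧ ((T \ X).Nonempty → T \ X = {(T \ X).sum id} ∧ 1 ≤ (T \ X).sum id) := by
        intro X hXG hXk hXc
        have hXc' : t + 2 ≤ (X ∩ T).card := by omega
        have hXT : (X ∩ T).card ≤ t + 3 := by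
          calc (X ∩ T).card ≤ T.card := Finset.card_le_card inter_subset_right
          _ = t + 3 := by rw [hT, Nat.card_Icc]; omega
        have hsd : (T \ X).card + (T ∩ X).card = T.card := Finset.card_sdiff_add_card_inter T X
        have hTX : (T ∩ X).card = (X ∩ T).card := by rw [Finset.inter_comm]
        have hTcard : T.card = t + 3 := by rw [hT, Nat.card_Icc]; omega
        have hc1 : (T \ X).card ≤ 1 := by omega
        refine ⟨hc1, fun hne => ?_⟩
        have : (T \ X).card = 1 := le_antisymm hc1 (Finset.card_pos.mpr hne)
        obtain ⟨i, hi⟩ := Finset.card_eq_one.mp this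
        have hiT : i ∈ T := by
          have : i ∈ T \ X := by rw [hi]; exact Finset.mem_singleton_self i
          exact (Finset.mem_sdiff.mp this).1
        have hi1 : 1 ≤ i := by rw [hT, Finset.mem_Icc] at hiT; exact hiT.1
        have hsum : (T \ X).sum id = i := by rw [hi, Finset.sum_singleton]; rfl
        rw [hsum, hi]
        exact ⟨rfl, hi1⟩
      have hKA := key A hA.1.1 hA.1.2 hA.2
      have hKB := key B hB.1.1 hB.1.2 hB.2
      have hTAB : T \ A = T \ B := by
        rcases Finset.eq_empty_or_nonempty (T \ A) with hAe | hAne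
        · rcases Finset.eq_empty_or_nonempty (T \ B) with hBe | hBne
          · rw [hAe, hBe]
          · exfalso
            have h1 := (hKB.2 hBne).2
            have h2 : (T \ A).sum id = 0 := by rw [hAe]; rfl
            omega
        · rcases Finset.eq_empty_or_nonempty (T \ B) with hBe | hBne
          · exfalso
            have h1 := (hKA.2 hAne).2
            have h2 : (T \ B).sum id = 0 := by rw [hBe]; rfl
            omega
          · rw [(hKA.2 hAne).1, (hKB.2 hBne).1, hsum]
      have hintAB : A ∩ T = B ∩ T := by
        have h1 : T \ (T \ A) = T \ (T \ B) := by rw [hTAB]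
        rw [Finset.sdiff_sdiff_self_left, Finset.sdiff_sdiff_self_left] at h1
        rw [Finset.inter_comm A T, Finset.inter_comm B T, h1]
      have : A \ T ∪ A ∩ T = B \ T ∪ B ∩ T := by rw [hintAB, hdiff]
      rwa [Finset.sdiff_union_inter, Finset.sdiff_union_inter] at this
  refine hle.trans ?_
  rw [htgt, Finset.card_sigma, Finset.sum_insert h0T]
  simp only [if_pos rfl]
  rw [Finset.card_powersetCard, hUcard]
  have : ∀ i ∈ T, (U.powersetCard (if i = 0 then k-t-3 else k-t-2)).card
      = Nat.choose (n-t-3) (k-t-2) := by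
    intro i hi
    have hi1 : 1 ≤ i := by rw [hT, Finset.mem_Icc] at hi; exact hi.1
    rw [if_neg (by omega), Finset.card_powersetCard, hUcard]
  rw [Finset.sum_congr rfl this, Finset.sum_const, hT, Nat.card_Icc]
  simp [Nat.smul_one_eq_cast]

lemma pascal3 (m e : ℕ) : Nat.choose (m+3) (e+3)
    = Nat.choose m e + 3 * Nat.choose m (e+1) + 3 * Nat.choose m (e+2) + Nat.choose m (e+3) := by
  have h1 : m + 3 = (m + 2) + 1 := rfl
  simp [Nat.choose_succ_succ, show m+3=(m+2)+1 from rfl, show m+2=(m+1)+1 from rfl,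
    show e+3=(e+2)+1 from rfl, show e+2=(e+1)+1 from rfl]
  ring

lemma chooseIneq (t e d : ℕ)
    (H : t*(e+2)*(e+3) < (d+2)*(d+1) + 3*((d+2)*(e+3))) :
    t * Nat.choose (e+d+3) (e+1) < 3 * Nat.choose (e+d+3) (e+2) + Nat.choose (e+d+3) (e+3) := by
  set m := e+d+3 with hm
  have hC : 0 < Nat.choose m (e+1) := Nat.choose_pos (by omega)
  have A1 : Nat.choose m (e+2) * (e+2) = Nat.choose m (e+1) * (d+2) := by
    have := Nat.choose_succ_right_eq m (e+1)
    rw [show m - (e+1) = d+2 by omega] at this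
    exact this
  have A2 : Nat.choose m (e+3) * (e+3) = Nat.choose m (e+2) * (d+1) := by
    have := Nat.choose_succ_right_eq m (e+2)
    rw [show m - (e+2) = d+1 by omega] at this
    exact this
  have key : t * Nat.choose m (e+1) * ((e+2)*(e+3))
      < (3 * Nat.choose m (e+2) + Nat.choose m (e+3)) * ((e+2)*(e+3)) := by
    calc t * Nat.choose m (e+1) * ((e+2)*(e+3))
        = (t*(e+2)*(e+3)) * Nat.choose m (e+1) := by ring
      _ < ((d+2)*(d+1) + 3*((d+2)*(e+3))) * Nat.choose m (e+1) :=
          Nat.mul_lt_mul_of_pos_right H hC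
      _ = 3 * (Nat.choose m (e+1) * (d+2)) * (e+3) + (Nat.choose m (e+1) * (d+2)) * (d+1) := by ring
      _ = 3 * (Nat.choose m (e+2) * (e+2)) * (e+3) + (Nat.choose m (e+2) * (e+2)) * (d+1) := by
          rw [A1]
      _ = 3 * (Nat.choose m (e+2)) * ((e+2)*(e+3)) + (Nat.choose m (e+2) * (d+1)) * (e+2) := by
          ring
      _ = 3 * (Nat.choose m (e+2)) * ((e+2)*(e+3)) + (Nat.choose m (e+3) * (e+3)) * (e+2) := by
          rw [A2]
      _ = (3 * Nat.choose m (e+2) + Nat.choose m (e+3)) * ((e+2)*(e+3)) := by ring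
  exact lt_of_mul_lt_mul_right key (Nat.zero_le _)

theorem franklFamilyOne_card_lt
    (t k n : ℕ) (ht : 2 ≤ t) (hk : t + 3 ≤ k)
    (hn : ((Real.sqrt (4 * (t : ℝ) + 9) - 1) / 2) * (k : ℝ) ≤ (n : ℝ)) :
    (franklFamilyOne n k 3 t).card < Nat.choose (n - t) (k - t) := by
  set u : ℝ := Real.sqrt (4 * (t:ℝ) + 9) with hu
  have hupos : (0:ℝ) ≤ 4 * (t:ℝ) + 9 := by positivity
  have hu2 : u^2 = 4 * (t:ℝ) + 9 := Real.sq_sqrt hupos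
  have hu17 : (17:ℝ) ≤ u^2 := by
    rw [hu2]
    have : (2:ℝ) ≤ (t:ℝ) := by exact_mod_cast ht
    linarith
  have hu4 : (4:ℝ) ≤ u := by
    nlinarith [Real.sqrt_nonneg (4 * (t:ℝ) + 9)]
  have hkr : (t:ℝ) + 3 ≤ (k:ℝ) := by exact_mod_cast hk
  have hk5 : (5:ℝ) ≤ (k:ℝ) := by
    have : (2:ℝ) ≤ (t:ℝ) := by exact_mod_cast ht
    linarith
  -- n ≥ k + 3
  have hnk : k + 3 ≤ n := by
    have h1 : (3/2 : ℝ) * (k:ℝ) ≤ (n:ℝ) := by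
      calc (3/2:ℝ)*(k:ℝ) = ((4-1)/2)*(k:ℝ) := by norm_num
        _ ≤ ((u-1)/2)*(k:ℝ) := by
            apply mul_le_mul_of_nonneg_right _ (by positivity)
            linarith
        _ ≤ (n:ℝ) := hn
    have h2 : ((k:ℝ)) + 2 < (n:ℝ) := by linarith
    have h3 : k + 2 < n := by exact_mod_cast h2
    omega
  obtain ⟨e, rfl⟩ := Nat.exists_eq_add_of_le hk
  obtain ⟨d, rfl⟩ := Nat.exists_eq_add_of_le hnk
  -- now k = t + 3 + e, n = (t+3+e) + 3 + d
  have hnt3 : t + 3 ≤ t + 3 + e + 3 + d := by omega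
  have hle := frankl_card_le (t + 3 + e + 3 + d) (t + 3 + e) t hnt3
  rw [show t + 3 + e + 3 + d - t - 3 = e + d + 3 by omega, show t + 3 + e - t - 3 = e by omega,
    show t + 3 + e - t - 2 = e + 1 by omega] at hle
  rw [show t + 3 + e + 3 + d - t = (e + d + 3) + 3 by omega, show t + 3 + e - t = e + 3 by omega,
    pascal3 (e+d+3) e]
  -- key numeric inequality
  have H : t*(e+2)*(e+3) < (d+2)*(d+1) + 3*((d+2)*(e+3)) := by
    have hr : (t:ℝ)*((e:ℝ)+3)*(((e:ℝ)+3)-1)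
        < ((d:ℝ)+2)*(((d:ℝ)+2)-1) + 3*((d:ℝ)+2)*((e:ℝ)+3) := by
      apply realIneq hu4 hu17 (t := (t:ℝ)) (k := (t:ℝ)+3+(e:ℝ)) (y := (d:ℝ)+2) (s := (e:ℝ)+3)
      · rw [hu2]; ring
      · ring
      · rw [hu2]; linarith
      · -- (u-3)*k - 2 ≤ 2*y
        have hn' : ((u-1)/2) * ((t:ℝ)+3+(e:ℝ)) ≤ (t:ℝ)+3+(e:ℝ)+3+(d:ℝ) := by
          have := hn
          push_cast at this
          convert this using 2 <;> push_cast <;> ring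
        nlinarith [hn']
    have : ((t*(e+2)*(e+3) : ℕ) : ℝ) < (((d+2)*(d+1) + 3*((d+2)*(e+3)) : ℕ) : ℝ) := by
      push_cast
      nlinarith [hr]
    exact_mod_cast this
  have hCI := chooseIneq t e d H
  have hexp : (t+3) * Nat.choose (e+d+3) (e+1) = t * Nat.choose (e+d+3) (e+1) + 3 * Nat.choose (e+d+3) (e+1) := by
    ring
  omega
end
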